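/- arXiv:1308.4822 — 8 statements merged into one kernel-verified Lean document; each statement's English description precedes it below -/
import Mathlib

section
/- Let (X,E) be a graph (E a reflexive binary relation on X). Then the relation ≤ on MPE(X,2) defined by φ ≤ ψ iff φ⁻¹(1) ⊆ ψ⁻¹(1) is a partial order, and (MPE(X,2), ≤) is a complete lattice; moreover, the infimum of any family {φ_i : i ∈ I} in this lattice is the unique element of MPE(X,2) whose preimage of 1 equals ⋂_{i∈I} φ_i⁻¹(1). -/
namespace CanExt

open Classical

/-- A partial map from `X` into the two-element chain `{0,1}` (encoded as `Bool`,
with `false` playing the role of `0` and `true` the role of `1`);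
`φ x = none` means `x` is outside the domain of `φ`. -/
abbrev PMap (X : Type*) := X → Option Bool

/-- The preimage of `1` of a partial map. -/
def pre1 {X : Type*} (φ : PMap X) : Set X := {x | φ x = some true}

/-- The preimage of `0` of a partial map. -/
def pre0 {X : Type*} (φ : PMap X) : Set X := {x | φ x = some false}

/-- A partial map is `E`-preserving if whenever `x, y` lie in its domain and
`(x,y) ∈ E`, then `φ x ≤ φ y`. -/
def EPres {X : Type*} (E : X → X → Prop) (φ : PMap X) : Prop :=
  ∀ ⦃x y : X⦄, E x y → ∀ ⦃a b : Bool⦄, φ x = some a → φ y = some b → a ≤ b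

/-- `PExt ψ φ` : the partial map `ψ` extends the partial map `φ`. -/
def PExt {X : Type*} (ψ φ : PMap X) : Prop :=
  ∀ ⦃x : X⦄ ⦃a : Bool⦄, φ x = some a → ψ x = some a

/-- The set of maximal partial `E`-preserving maps from `(X,E)` into the
two-element chain `2`. -/
def MPE {X : Type*} (E : X → X → Prop) : Set (PMap X) :=
  {φ | EPres E φ ∧ ∀ ψ : PMap X, EPres E ψ → PExt ψ φ → ψ = φ}

/-- A partial morphism from a graph with topology `(X,E,t)` to `2_τ`:
the preimages of `1` and `0` are `t`-closed (equivalently, the domain is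
closed and the restriction to the domain is continuous into discrete `2`),
and the map is `E`-preserving. -/
def PMorphT {X : Type*} (E : X → X → Prop) (t : TopologicalSpace X) (φ : PMap X) : Prop :=
  EPres E φ ∧ @IsClosed X t (pre1 φ) ∧ @IsClosed X t (pre0 φ)

/-- The set of maximal partial morphisms from `(X,E,t)` to `2_τ`. -/
def MPM {X : Type*} (E : X → X → Prop) (t : TopologicalSpace X) : Set (PMap X) :=
  {φ | PMorphT E t φ ∧ ∀ ψ : PMap X, PMorphT E t ψ → PExt ψ φ → ψ = φ}

/-- The relation `E` between partial maps on a lattice `L`: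
`(f,g) ∈ E` iff `f x ≤ g x` for all `x ∈ dom f ∩ dom g`. -/
def ErelP {L : Type*} (f g : PMap L) : Prop :=
  ∀ ⦃x : L⦄ ⦃a b : Bool⦄, f x = some a → g x = some b → a ≤ b

/-- `f ≤₁ g` iff `f⁻¹(1) ⊆ g⁻¹(1)`. -/
def le1 {L : Type*} (f g : PMap L) : Prop := pre1 f ⊆ pre1 g

/-- `f ≤₂ g` iff `f⁻¹(0) ⊆ g⁻¹(0)`. -/
def le2 {L : Type*} (f g : PMap L) : Prop := pre0 f ⊆ pre0 g

section Lat

variable (L : Type*) [Lattice L] [BoundedOrder L]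

/-- A partial homomorphism from a bounded lattice `L` to the two-element
bounded lattice `2_B`: its domain is a `{0,1}`-sublattice of `L` and the
restriction to the domain is a bounded-lattice homomorphism. -/
def PHom (f : PMap L) : Prop :=
  f ⊥ = some false ∧ f ⊤ = some true ∧
  ∀ ⦃a b : L⦄ ⦃x y : Bool⦄, f a = some x → f b = some y →
    f (a ⊓ b) = some (x ⊓ y) ∧ f (a ⊔ b) = some (x ⊔ y)

/-- The set of maximal partial homomorphisms (MPHs) from `L` to `2_B`. -/
def MPHset : Set (PMap L) := {f | PHom L f ∧ ∀ g : PMap L, PHom L g → PExt g f → g = f}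

/-- The underlying set of the graph `D♭(L)`. -/
abbrev MPHsub := {f : PMap L // f ∈ MPHset L}

/-- The relation `E` on `MPH(L, 2_B)`, giving the graph `D♭(L)`. -/
def EM (f g : MPHsub L) : Prop := ErelP f.1 g.1

/-- The evaluation map `e_a` on `MPH(L,2_B)` : `e_a(f) = f(a)` if `a ∈ dom f`. -/
def evalM (a : L) : PMap (MPHsub L) := fun f => f.1 a

/-- `V_a = {f ∈ MPH(L,2_B) : f(a) = 0}`. -/
def VaM (a : L) : Set (MPHsub L) := {f | f.1 a = some false}

/-- `W_a = {f ∈ MPH(L,2_B) : f(a) = 1}`. -/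
def WaM (a : L) : Set (MPHsub L) := {f | f.1 a = some true}

/-- The topology on `MPH(L,2_B)` with the sets `V_a`, `W_a` as a subbasis of
closed sets. -/
def tauM : TopologicalSpace (MPHsub L) :=
  TopologicalSpace.generateFrom {U | ∃ a : L, U = (VaM L a)ᶜ ∨ U = (WaM L a)ᶜ}

/-- A (nonempty) lattice filter. -/
def IsLatFilter (F : Set L) : Prop :=
  F.Nonempty ∧ (∀ ⦃a b : L⦄, a ∈ F → a ≤ b → b ∈ F) ∧
    (∀ ⦃a b : L⦄, a ∈ F → b ∈ F → a ⊓ b ∈ F)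

/-- A (nonempty) lattice ideal. -/
def IsLatIdeal (I : Set L) : Prop :=
  I.Nonempty ∧ (∀ ⦃a b : L⦄, a ∈ I → b ≤ a → b ∈ I) ∧
    (∀ ⦃a b : L⦄, a ∈ I → b ∈ I → a ⊔ b ∈ I)

/-- The set of special partial homomorphisms (SPHs) from `L` to `2_B`:
`f⁻¹(1)` is a nonempty filter, `f⁻¹(0)` is a nonempty ideal, and they are
disjoint. -/
def SPHset : Set (PMap L) :=
  {f | IsLatFilter L (pre1 f) ∧ IsLatIdeal L (pre0 f) ∧ Disjoint (pre1 f) (pre0 f)}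

/-- The underlying set of the graph `D̄♭(L)`. -/
abbrev SPHsub := {f : PMap L // f ∈ SPHset L}

/-- The relation `E` on `SPH(L, 2_B)`, giving the graph `D̄♭(L)`. -/
def ES (f g : SPHsub L) : Prop := ErelP f.1 g.1

/-- The evaluation map `ē_a` on `SPH(L,2_B)`. -/
def evalS (a : L) : PMap (SPHsub L) := fun f => f.1 a

/-- `V_a = {f ∈ SPH(L,2_B) : f(a) = 0}`. -/
def VaS (a : L) : Set (SPHsub L) := {f | f.1 a = some false}

/-- `W_a = {f ∈ SPH(L,2_B) : f(a) = 1}`. -/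
def WaS (a : L) : Set (SPHsub L) := {f | f.1 a = some true}

/-- The topology on `SPH(L,2_B)` with the sets `V_a`, `W_a` as a subbasis of
closed sets. -/
def tauS : TopologicalSpace (SPHsub L) :=
  TopologicalSpace.generateFrom {U | ∃ a : L, U = (VaS L a)ᶜ ∨ U = (WaS L a)ᶜ}

/-- The carrier of the completion built from `D♭(L)`. -/
abbrev CX := {φ : PMap (MPHsub L) // φ ∈ MPE (EM L)}

/-- The carrier of the completion built from `D̄♭(L)`. -/
abbrev CY := {φ : PMap (SPHsub L) // φ ∈ MPE (ES L)}

end Lat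

section Aux

variable {X : Type*} (E : X → X → Prop)

/-- Points that receive no `E`-edge from any point of `U`. -/
def lset (U : Set X) : Set X := {x | ∀ y ∈ U, ¬ E y x}

/-- Points that send no `E`-edge to any point of `V`. -/
def rset (V : Set X) : Set X := {x | ∀ z ∈ V, ¬ E x z}

/-- The canonical maximal partial map generated by `U`. -/
noncomputable def mkMap (U : Set X) : PMap X := fun x =>
  if x ∈ rset E (lset E U) then some true
  else if x ∈ lset E U then some false else none

variable {E}

lemma subset_rl {U : Set X} : U ⊆ rset E (lset E U) :=
  fun x hx z hz hxz => hz x hx hxz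

lemma rl_mono {U U' : Set X} (h : U ⊆ U') :
    rset E (lset E U) ⊆ rset E (lset E U') := by
  intro x hx z hz
  exact hx z (fun y hy => hz y (h hy))

lemma mem_lset_not_rl (hE : Reflexive E) {U : Set X} {x : X}
    (hx : x ∈ lset E U) : x ∉ rset E (lset E U) :=
  fun h => h x hx (hE x)

lemma mkMap_eq_true_iff {U : Set X} {x : X} :
    mkMap E U x = some true ↔ x ∈ rset E (lset E U) := by
  unfold mkMap
  split_ifs with h1 h2 <;> simp_all

lemma mkMap_eq_false_iff (hE : Reflexive E) {U : Set X} {x : X} :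
    mkMap E U x = some false ↔ x ∈ lset E U := by
  unfold mkMap
  constructor
  · intro h
    split_ifs at h with h1 h2
    · exact absurd h (by simp)
    · exact h2
  · intro h
    rw [if_neg (mem_lset_not_rl hE h), if_pos h]

lemma mkMap_mem (hE : Reflexive E) (U : Set X) : mkMap E U ∈ MPE E := by
  constructor
  · -- E-preserving
    intro x y hxy a b hx hy
    cases a with
    | false => exact Bool.false_le b
    | true =>
      cases b with
      | true => exact le_rfl
      | false =>
        have hx' : x ∈ rset E (lset E U) := mkMap_eq_true_iff.mp hx
        have hy' : y ∈ lset E U := (mkMap_eq_false_iff hE).mp hy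
        exact absurd hxy (hx' y hy')
  · -- maximal
    intro ψ hψ hext
    funext x
    rcases hm : mkMap E U x with _ | a
    · -- mkMap is undefined at x; show ψ is as well
      rcases hψx : ψ x with _ | b
      · rfl
      · exfalso
        have hx1 : x ∉ rset E (lset E U) := fun h => by
          rw [mkMap_eq_true_iff.mpr h] at hm; exact nomatch hm
        have hx0 : x ∉ lset E U := fun h => by
          rw [(mkMap_eq_false_iff hE).mpr h] at hm; exact nomatch hm
        cases b with
        | true =>
          -- there is z ∈ lset with E x z
          simp only [rset, Set.mem_setOf_eq, not_forall, not_not] at hx1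
          obtain ⟨z, hz, hxz⟩ := hx1
          have hz' : ψ z = some false :=
            hext ((mkMap_eq_false_iff hE).mpr hz)
          exact absurd (hψ hxz hψx hz') (by decide)
        | false =>
          simp only [lset, Set.mem_setOf_eq, not_forall, not_not] at hx0
          obtain ⟨y, hy, hyx⟩ := hx0
          have hy' : ψ y = some true :=
            hext (mkMap_eq_true_iff.mpr (subset_rl hy))
          exact absurd (hψ hyx hy' hψx) (by decide)
    · exact hext hm

lemma pre0_eq_lset (hE : Reflexive E) {φ : PMap X} (hφ : φ ∈ MPE E) :
    pre0 φ = lset E (pre1 φ) := by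
  apply subset_antisymm
  · intro x hx y hy hyx
    exact absurd (hφ.1 hyx hy hx) (by decide)
  · intro x hx
    -- x receives no edge from pre1 φ; extend φ by x ↦ false
    set ψ : PMap X := fun y => if y = x then some false else φ y with hψdef
    have hψE : EPres E ψ := by
      intro u v huv a b hu hv
      by_cases hux : u = x
      · subst hux
        simp only [hψdef, if_pos rfl] at hu
        cases hu
        exact Bool.false_le b
      · simp only [hψdef, if_neg hux] at hu
        by_cases hvx : v = x
        · subst hvx
          simp only [hψdef, if_pos rfl] at hv
          cases hv
          cases a with
          | false => exact le_rfl
          | true => exact absurd huv (hx u hu)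
        · simp only [hψdef, if_neg hvx] at hv
          exact hφ.1 huv hu hv
    have hψext : PExt ψ φ := by
      intro y a hy
      by_cases hyx : y = x
      · have hy' : φ x = some a := hyx ▸ hy
        cases a with
        | true => exact absurd (hE x) (hx x hy')
        | false => simp [hψdef, hyx]
      · simp [hψdef, hyx, hy]
    have := hφ.2 ψ hψE hψext
    have hx' : ψ x = some false := by simp [hψdef]
    rw [this] at hx'
    exact hx'

lemma pre1_eq_rset (hE : Reflexive E) {φ : PMap X} (hφ : φ ∈ MPE E) :
    pre1 φ = rset E (pre0 φ) := by
  apply subset_antisymm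
  · intro x hx z hz hxz
    exact absurd (hφ.1 hxz hx hz) (by decide)
  · intro x hx
    set ψ : PMap X := fun y => if y = x then some true else φ y with hψdef
    have hψE : EPres E ψ := by
      intro u v huv a b hu hv
      by_cases hvx : v = x
      · subst hvx
        simp only [hψdef, if_pos rfl] at hv
        cases hv
        exact Bool.le_true a
      · simp only [hψdef, if_neg hvx] at hv
        by_cases hux : u = x
        · subst hux
          simp only [hψdef, if_pos rfl] at hu
          cases hu
          cases b with
          | true => exact le_rfl
          | false => exact absurd huv (hx v hv)
        · simp only [hψdef, if_neg hux] at hu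
          exact hφ.1 huv hu hv
    have hψext : PExt ψ φ := by
      intro y a hy
      by_cases hyx : y = x
      · have hy' : φ x = some a := hyx ▸ hy
        cases a with
        | false => exact absurd (hE x) (hx x hy')
        | true => simp [hψdef, hyx]
      · simp [hψdef, hyx, hy]
    have := hφ.2 ψ hψE hψext
    have hx' : ψ x = some true := by simp [hψdef]
    rw [this] at hx'
    exact hx'

lemma eq_mkMap (hE : Reflexive E) {φ : PMap X} (hφ : φ ∈ MPE E) :
    φ = mkMap E (pre1 φ) := by
  have h1 : rset E (lset E (pre1 φ)) = pre1 φ := by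
    rw [← pre0_eq_lset hE hφ, ← pre1_eq_rset hE hφ]
  have h0 : lset E (pre1 φ) = pre0 φ := (pre0_eq_lset hE hφ).symm
  funext x
  rcases hx : φ x with _ | a
  · symm
    rcases hm : mkMap E (pre1 φ) x with _ | b
    · rfl
    · exfalso
      cases b with
      | true =>
        have : x ∈ pre1 φ := h1 ▸ mkMap_eq_true_iff.mp hm
        rw [pre1, Set.mem_setOf_eq, hx] at this
        exact nomatch this
      | false =>
        have : x ∈ pre0 φ := h0 ▸ (mkMap_eq_false_iff hE).mp hm
        rw [pre0, Set.mem_setOf_eq, hx] at this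
        exact nomatch this
  · cases a with
    | true =>
      exact (mkMap_eq_true_iff.mpr (h1.symm ▸ (hx : x ∈ pre1 φ))).symm
    | false =>
      exact ((mkMap_eq_false_iff hE).mpr (h0.symm ▸ (hx : x ∈ pre0 φ))).symm

lemma mpe_inj (hE : Reflexive E) {φ ψ : PMap X} (hφ : φ ∈ MPE E)
    (hψ : ψ ∈ MPE E) (h : pre1 φ = pre1 ψ) : φ = ψ := by
  rw [eq_mkMap hE hφ, eq_mkMap hE hψ, h]

end Aux

/-- For a graph `(X,E)` (with `E` reflexive), the relation
`φ ≤ ψ ↔ φ⁻¹(1) ⊆ ψ⁻¹(1)` on `MPE(X,2)` is a partial order making it a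
complete lattice, in which the infimum of any family is the unique element of
`MPE(X,2)` whose preimage of `1` is the intersection of the preimages of `1`. -/
theorem stmt_0 {X : Type*} (E : X → X → Prop) (hE : Reflexive E) :
    IsPartialOrder {φ : PMap X // φ ∈ MPE E} (fun φ ψ => pre1 φ.1 ⊆ pre1 ψ.1) ∧
    ∃ inst : CompleteLattice {φ : PMap X // φ ∈ MPE E},
      (∀ φ ψ : {φ : PMap X // φ ∈ MPE E}, inst.le φ ψ ↔ pre1 φ.1 ⊆ pre1 ψ.1) ∧
      ∀ S : Set {φ : PMap X // φ ∈ MPE E},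
        pre1 (inst.sInf S).1 = ⋂ φ ∈ S, pre1 φ.1 ∧
        ∀ χ : {φ : PMap X // φ ∈ MPE E},
          pre1 χ.1 = ⋂ φ ∈ S, pre1 φ.1 → χ = inst.sInf S := by
  classical
  have inj : ∀ φ ψ : {φ : PMap X // φ ∈ MPE E},
      pre1 φ.1 = pre1 ψ.1 → φ = ψ :=
    fun φ ψ h => Subtype.ext (mpe_inj hE φ.2 ψ.2 h)
  refine ⟨?_, ?_⟩
  · exact
      { refl := fun φ => subset_rfl
        trans := fun a b c hab hbc => hab.trans hbc
        antisymm := fun a b hab hba => inj a b (hab.antisymm hba) }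
  · letI : PartialOrder {φ : PMap X // φ ∈ MPE E} :=
      { le := fun φ ψ => pre1 φ.1 ⊆ pre1 ψ.1
        le_refl := fun φ => subset_rfl
        le_trans := fun a b c hab hbc x hx => hbc (hab hx)
        le_antisymm := fun a b hab hba => inj a b (Set.Subset.antisymm hab hba) }
    letI : InfSet {φ : PMap X // φ ∈ MPE E} :=
      ⟨fun S => ⟨mkMap E (⋂ φ ∈ S, pre1 φ.1), mkMap_mem hE _⟩⟩
    have key : ∀ S : Set {φ : PMap X // φ ∈ MPE E},
        pre1 (sInf S).1 = ⋂ φ ∈ S, pre1 φ.1 := by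
      intro S
      show pre1 (mkMap E (⋂ φ ∈ S, pre1 φ.1)) = ⋂ φ ∈ S, pre1 φ.1
      have hp : pre1 (mkMap E (⋂ φ ∈ S, pre1 φ.1))
          = rset E (lset E (⋂ φ ∈ S, pre1 φ.1)) := by
        ext x; exact mkMap_eq_true_iff
      rw [hp]
      apply subset_antisymm
      · intro x hx
        simp only [Set.mem_iInter]
        intro φ hφS
        have h1 : (⋂ ψ ∈ S, pre1 ψ.1) ⊆ pre1 φ.1 := by
          intro y hy
          simp only [Set.mem_iInter] at hy
          exact hy φ hφS
        have h2 := rl_mono h1 hx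
        rwa [← pre0_eq_lset hE φ.2, ← pre1_eq_rset hE φ.2] at h2
      · exact subset_rl
    letI inst : CompleteLattice {φ : PMap X // φ ∈ MPE E} :=
      completeLatticeOfInf _ (by
        intro S
        constructor
        · intro φ hφ
          show pre1 (sInf S).1 ⊆ pre1 φ.1
          rw [key S]
          intro y hy
          simp only [Set.mem_iInter] at hy
          exact hy φ hφ
        · intro χ hχ
          show pre1 χ.1 ⊆ pre1 (sInf S).1
          rw [key S]
          intro y hy
          simp only [Set.mem_iInter]
          exact fun φ hφ => hχ hφ hy)
    refine ⟨inst, fun φ ψ => Iff.rfl, fun S => ⟨key S, ?_⟩⟩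
    intro χ hχ
    exact inj χ (sInf S) (by rw [hχ, key S])

end CanExt
end

section
/- Let (X,E) be a graph (E a reflexive binary relation on X) and let φ ∈ MPE(X,2). Then (i) φ⁻¹(0) = {x ∈ X : there is no y ∈ φ⁻¹(1) with (y,x) ∈ E}, and (ii) φ⁻¹(1) = {x ∈ X : there is no y ∈ φ⁻¹(0) with (x,y) ∈ E}. -/
namespace CanExt

open Classical

/-- For a graph `(X,E)` (with `E` reflexive) and `φ ∈ MPE(X,2)`:
(i) `φ⁻¹(0) = {x : no y ∈ φ⁻¹(1) with (y,x) ∈ E}`;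
(ii) `φ⁻¹(1) = {x : no y ∈ φ⁻¹(0) with (x,y) ∈ E}`. -/
theorem stmt_1 {X : Type*} (E : X → X → Prop) (hE : Reflexive E)
    (φ : PMap X) (hφ : φ ∈ MPE E) :
    pre0 φ = {x : X | ¬ ∃ y ∈ pre1 φ, E y x} ∧
    pre1 φ = {x : X | ¬ ∃ y ∈ pre0 φ, E x y} := by
  obtain ⟨hpres, hmax⟩ := hφ
  constructor
  · ext x
    simp only [Set.mem_setOf_eq, pre0, pre1]
    constructor
    · rintro hx ⟨y, hy, hyx⟩
      have := hpres hyx hy hx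
      exact absurd this (by decide)
    · intro hx
      -- extend φ at x by false
      classical
      set ψ : PMap X := fun z => if z = x then some false else φ z with hψ
      have hψx : ψ x = some false := by simp [hψ]
      have hext : PExt ψ φ := by
        intro z a hz
        by_cases hzx : z = x
        · subst hzx
          cases a with
          | false => simpa [hψ]
          | true => exact absurd ⟨z, hz, hE z⟩ hx
        · simpa [hψ, hzx]
      have hψpres : EPres E ψ := by
        intro u v huv a b hu hv
        by_cases hux : u = x
        · subst hux
          rw [hψx] at hu
          cases hu; simp
        · by_cases hvx : v = x
          · subst hvx
            rw [hψx] at hv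
            cases hv
            simp only [hψ, if_neg hux] at hu
            cases a with
            | false => simp
            | true => exact absurd ⟨u, hu, huv⟩ hx
          · simp only [hψ, if_neg hux, if_neg hvx] at hu hv
            exact hpres huv hu hv
      have := hmax ψ hψpres hext
      rw [← this, hψx]
  · ext x
    simp only [Set.mem_setOf_eq, pre0, pre1]
    constructor
    · rintro hx ⟨y, hy, hxy⟩
      have := hpres hxy hx hy
      exact absurd this (by decide)
    · intro hx
      classical
      set ψ : PMap X := fun z => if z = x then some true else φ z with hψ
      have hψx : ψ x = some true := by simp [hψ]
      have hext : PExt ψ φ := by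
        intro z a hz
        by_cases hzx : z = x
        · subst hzx
          cases a with
          | true => simpa [hψ]
          | false => exact absurd ⟨z, hz, hE z⟩ hx
        · simpa [hψ, hzx]
      have hψpres : EPres E ψ := by
        intro u v huv a b hu hv
        by_cases hvx : v = x
        · subst hvx
          rw [hψx] at hv
          cases hv; simp
        · by_cases hux : u = x
          · subst hux
            rw [hψx] at hu
            cases hu
            simp only [hψ, if_neg hvx] at hv
            cases b with
            | true => simp
            | false => exact absurd ⟨v, hv, huv⟩ hx
          · simp only [hψ, if_neg hux, if_neg hvx] at hu hv
            exact hpres huv hu hv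
      have := hmax ψ hψpres hext
      rw [← this, hψx]

end CanExt
end

section
/- Let (X,E) be a graph (E a reflexive binary relation on X) and let {φ_i : i ∈ I} ⊆ MPE(X,2). Then the partial maps e^∧ and e^∨ belong to MPE(X,2), and they extend the pointwise meet p^∧ and the pointwise join p^∨, respectively. -/
namespace CanExt

open Classical

open Classical in
/-- The pointwise meet `p^∧` of a family of partial maps. -/
noncomputable def pMeet {X I : Type*} (φ : I → PMap X) : PMap X := fun x =>
  if x ∈ ⋂ i, pre1 (φ i) then some true
  else if x ∈ ⋃ i, pre0 (φ i) then some false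
  else none

open Classical in
/-- The pointwise join `p^∨` of a family of partial maps. -/
noncomputable def pJoin {X I : Type*} (φ : I → PMap X) : PMap X := fun x =>
  if x ∈ ⋃ i, pre1 (φ i) then some true
  else if x ∈ ⋂ i, pre0 (φ i) then some false
  else none

open Classical in
/-- The extension `e^∧` of the pointwise meet. -/
noncomputable def eMeet {X I : Type*} (E : X → X → Prop) (φ : I → PMap X) : PMap X := fun x =>
  if x ∈ ⋂ i, pre1 (φ i) then some true
  else if ¬ ∃ y ∈ ⋂ i, pre1 (φ i), E y x then some false
  else none

open Classical in
/-- The extension `e^∨` of the pointwise join. -/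
noncomputable def eJoin {X I : Type*} (E : X → X → Prop) (φ : I → PMap X) : PMap X := fun x =>
  if ¬ ∃ y ∈ ⋂ i, pre0 (φ i), E x y then some true
  else if x ∈ ⋂ i, pre0 (φ i) then some false
  else none

section Aux

variable {X I : Type*} {E : X → X → Prop}

private lemma not_epres {f : PMap X} (hf : ¬ EPres E f) :
    ∃ u v, E u v ∧ f u = some true ∧ f v = some false := by
  simp only [EPres, not_forall] at hf
  obtain ⟨u, v, huv, a, b, hu, hv, hab⟩ := hf
  cases a with
  | false => exact absurd (Bool.false_le b) hab
  | true =>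
    cases b with
    | true => exact absurd (le_refl true) hab
    | false => exact ⟨u, v, huv, hu, hv⟩

private lemma no_true_ext {f : PMap X} (hf : f ∈ MPE E) {x : X} (hx : f x = none) :
    ∃ z, E x z ∧ f z = some false := by
  classical
  set ψ : PMap X := fun w => if w = x then some true else f w with hψ
  have hext : PExt ψ f := by
    intro w a hw
    have hwx : w ≠ x := by rintro rfl; rw [hx] at hw; cases hw
    simp [hψ, hwx, hw]
  have hne : ψ ≠ f := by
    intro h
    have := congrFun h x
    simp [hψ, hx] at this
  have hnp : ¬ EPres E ψ := fun hp => hne (hf.2 ψ hp hext)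
  obtain ⟨u, v, huv, hu, hv⟩ := not_epres hnp
  have hvx : v ≠ x := by
    rintro rfl; simp [hψ] at hv
  have hfv : f v = some false := by simpa [hψ, hvx] using hv
  by_cases hux : u = x
  · exact ⟨v, hux ▸ huv, hfv⟩
  · have hfu : f u = some true := by simpa [hψ, hux] using hu
    exact absurd (hf.1 huv hfu hfv) (by decide)

private lemma no_false_ext {f : PMap X} (hf : f ∈ MPE E) {x : X} (hx : f x = none) :
    ∃ w, E w x ∧ f w = some true := by
  classical
  set ψ : PMap X := fun w => if w = x then some false else f w with hψ
  have hext : PExt ψ f := by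
    intro w a hw
    have hwx : w ≠ x := by rintro rfl; rw [hx] at hw; cases hw
    simp [hψ, hwx, hw]
  have hne : ψ ≠ f := by
    intro h
    have := congrFun h x
    simp [hψ, hx] at this
  have hnp : ¬ EPres E ψ := fun hp => hne (hf.2 ψ hp hext)
  obtain ⟨u, v, huv, hu, hv⟩ := not_epres hnp
  have hux : u ≠ x := by
    rintro rfl; simp [hψ] at hu
  have hfu : f u = some true := by simpa [hψ, hux] using hu
  by_cases hvx : v = x
  · exact ⟨u, hvx ▸ huv, hfu⟩
  · have hfv : f v = some false := by simpa [hψ, hvx] using hv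
    exact absurd (hf.1 huv hfu hfv) (by decide)

end Aux

/-- For a graph `(X,E)` (with `E` reflexive) and a family
`{φ_i : i ∈ I} ⊆ MPE(X,2)`, the maps `e^∧` and `e^∨` belong to `MPE(X,2)` and
extend the pointwise meet `p^∧` and the pointwise join `p^∨`, respectively. -/
theorem stmt_2 {X I : Type*} (E : X → X → Prop) (hE : Reflexive E)
    (φ : I → PMap X) (hφ : ∀ i : I, φ i ∈ MPE E) :
    eMeet E φ ∈ MPE E ∧ eJoin E φ ∈ MPE E ∧
    PExt (eMeet E φ) (pMeet φ) ∧ PExt (eJoin E φ) (pJoin φ) := by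
  classical
  set A : Set X := ⋂ i, pre1 (φ i) with hA
  set B : Set X := ⋂ i, pre0 (φ i) with hB
  have hmemA : ∀ x, x ∈ A ↔ ∀ i, φ i x = some true := by
    intro x; simp [hA, pre1, Set.mem_iInter, Set.mem_setOf_eq]
  have hmemB : ∀ x, x ∈ B ↔ ∀ i, φ i x = some false := by
    intro x; simp [hB, pre0, Set.mem_iInter, Set.mem_setOf_eq]
  -- value lemmas for eMeet
  have hMt : ∀ x, eMeet E φ x = some true ↔ x ∈ A := by
    intro x
    by_cases h1 : x ∈ ⋂ i, pre1 (φ i)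
    · simp only [eMeet, if_pos h1]; exact iff_of_true trivial h1
    · by_cases h2 : ∃ y ∈ ⋂ i, pre1 (φ i), E y x
      · simp only [eMeet, if_neg h1, if_neg (not_not.mpr h2)]
        exact iff_of_false (by simp) h1
      · simp only [eMeet, if_neg h1, if_pos h2]
        exact iff_of_false (by simp) h1
  have hMf : ∀ x, eMeet E φ x = some false ↔ (¬ ∃ y ∈ ⋂ i, pre1 (φ i), E y x) := by
    intro x
    by_cases h1 : x ∈ ⋂ i, pre1 (φ i)
    · simp only [eMeet, if_pos h1]
      exact iff_of_false (by simp) (not_not.mpr ⟨x, h1, hE x⟩)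
    · by_cases h2 : ∃ y ∈ ⋂ i, pre1 (φ i), E y x
      · simp only [eMeet, if_neg h1, if_neg (not_not.mpr h2)]
        exact iff_of_false (by simp) (not_not.mpr h2)
      · simp only [eMeet, if_neg h1, if_pos h2]
        exact iff_of_true trivial h2
  have hMn : ∀ x, eMeet E φ x = none ↔ (x ∉ A ∧ ∃ y ∈ ⋂ i, pre1 (φ i), E y x) := by
    intro x
    by_cases h1 : x ∈ ⋂ i, pre1 (φ i)
    · simp only [eMeet, if_pos h1]
      exact iff_of_false (by simp) (fun h => h.1 h1)
    · by_cases h2 : ∃ y ∈ ⋂ i, pre1 (φ i), E y x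
      · simp only [eMeet, if_neg h1, if_neg (not_not.mpr h2)]
        exact iff_of_true trivial ⟨h1, h2⟩
      · simp only [eMeet, if_neg h1, if_pos h2]
        exact iff_of_false (by simp) (fun h => h2 h.2)
  -- value lemmas for eJoin
  have hJt : ∀ x, eJoin E φ x = some true ↔ (¬ ∃ y ∈ ⋂ i, pre0 (φ i), E x y) := by
    intro x
    by_cases h1 : ∃ y ∈ ⋂ i, pre0 (φ i), E x y
    · by_cases h2 : x ∈ ⋂ i, pre0 (φ i)
      · simp only [eJoin, if_neg (not_not.mpr h1), if_pos h2]
        exact iff_of_false (by simp) (not_not.mpr h1)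
      · simp only [eJoin, if_neg (not_not.mpr h1), if_neg h2]
        exact iff_of_false (by simp) (not_not.mpr h1)
    · simp only [eJoin, if_pos h1]; exact iff_of_true trivial h1
  have hJf : ∀ x, eJoin E φ x = some false ↔ x ∈ B := by
    intro x
    by_cases h1 : ∃ y ∈ ⋂ i, pre0 (φ i), E x y
    · by_cases h2 : x ∈ ⋂ i, pre0 (φ i)
      · simp only [eJoin, if_neg (not_not.mpr h1), if_pos h2]
        exact iff_of_true trivial h2
      · simp only [eJoin, if_neg (not_not.mpr h1), if_neg h2]
        exact iff_of_false (by simp) h2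
    · simp only [eJoin, if_pos h1]
      exact iff_of_false (by simp) (fun hxB => h1 ⟨x, hxB, hE x⟩)
  have hJn : ∀ x, eJoin E φ x = none ↔ (x ∉ B ∧ ∃ y ∈ ⋂ i, pre0 (φ i), E x y) := by
    intro x
    by_cases h1 : ∃ y ∈ ⋂ i, pre0 (φ i), E x y
    · by_cases h2 : x ∈ ⋂ i, pre0 (φ i)
      · simp only [eJoin, if_neg (not_not.mpr h1), if_pos h2]
        exact iff_of_false (by simp) (fun h => h.1 h2)
      · simp only [eJoin, if_neg (not_not.mpr h1), if_neg h2]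
        exact iff_of_true trivial ⟨h2, h1⟩
    · simp only [eJoin, if_pos h1]
      exact iff_of_false (by simp) (fun h => h1 h.2)
  -- eMeet is E-preserving
  have hMp : EPres E (eMeet E φ) := by
    intro x y hxy a b hx hy
    cases a with
    | false => simp
    | true =>
      cases b with
      | true => simp
      | false =>
        exact absurd ⟨x, (hMt x).mp hx, hxy⟩ ((hMf y).mp hy)
  -- eJoin is E-preserving
  have hJp : EPres E (eJoin E φ) := by
    intro x y hxy a b hx hy
    cases a with
    | false => simp
    | true =>
      cases b with
      | true => simp
      | false =>
        exact absurd ⟨y, (hJf y).mp hy, hxy⟩ ((hJt x).mp hx)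
  refine ⟨⟨hMp, ?_⟩, ⟨hJp, ?_⟩, ?_, ?_⟩
  · -- maximality of eMeet
    intro ψ hψ hext
    funext x
    cases hval : eMeet E φ x with
    | some a => exact hext hval
    | none =>
      obtain ⟨hxA, y, hyA, hEyx⟩ := (hMn x).mp hval
      cases hψx : ψ x with
      | none => rfl
      | some b =>
        exfalso
        cases b with
        | false =>
          have hψy : ψ y = some true := hext ((hMt y).mpr hyA)
          exact absurd (hψ hEyx hψy hψx) (by decide)
        | true =>
          obtain ⟨i, hi⟩ : ∃ i, φ i x ≠ some true := by
            by_contra h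
            push_neg at h
            exact hxA ((hmemA x).mpr h)
          have hiy : φ i y = some true := (hmemA y).mp hyA i
          have hinone : φ i x = none := by
            cases hix : φ i x with
            | none => rfl
            | some c =>
              cases c with
              | true => exact absurd hix hi
              | false => exact absurd ((hφ i).1 hEyx hiy hix) (by decide)
          obtain ⟨z, hExz, hz⟩ := no_true_ext (hφ i) hinone
          have hzf : eMeet E φ z = some false := by
            refine (hMf z).mpr ?_
            rintro ⟨y', hy'A, hEy'z⟩
            exact absurd ((hφ i).1 hEy'z ((hmemA y').mp hy'A i) hz) (by decide)
          exact absurd (hψ hExz hψx (hext hzf)) (by decide)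
  · -- maximality of eJoin
    intro ψ hψ hext
    funext x
    cases hval : eJoin E φ x with
    | some a => exact hext hval
    | none =>
      obtain ⟨hxB, y, hyB, hExy⟩ := (hJn x).mp hval
      cases hψx : ψ x with
      | none => rfl
      | some b =>
        exfalso
        cases b with
        | true =>
          have hψy : ψ y = some false := hext ((hJf y).mpr hyB)
          exact absurd (hψ hExy hψx hψy) (by decide)
        | false =>
          obtain ⟨i, hi⟩ : ∃ i, φ i x ≠ some false := by
            by_contra h
            push_neg at h
            exact hxB ((hmemB x).mpr h)
          have hiy : φ i y = some false := (hmemB y).mp hyB i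
          have hinone : φ i x = none := by
            cases hix : φ i x with
            | none => rfl
            | some c =>
              cases c with
              | false => exact absurd hix hi
              | true => exact absurd ((hφ i).1 hExy hix hiy) (by decide)
          obtain ⟨w, hEwx, hw⟩ := no_false_ext (hφ i) hinone
          have hwt : eJoin E φ w = some true := by
            refine (hJt w).mpr ?_
            rintro ⟨y', hy'B, hEwy'⟩
            exact absurd ((hφ i).1 hEwy' hw ((hmemB y').mp hy'B i)) (by decide)
          exact absurd (hψ hEwx (hext hwt) hψx) (by decide)
  · -- eMeet extends pMeet
    intro x a hx
    unfold pMeet at hx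
    split_ifs at hx with h1 h2
    · rw [← hx]; exact (hMt x).mpr h1
    · rw [← hx]
      refine (hMf x).mpr ?_
      rintro ⟨y, hyA, hEyx⟩
      obtain ⟨i, hix⟩ : ∃ i, φ i x = some false := by
        simpa [pre0, Set.mem_iUnion, Set.mem_setOf_eq] using h2
      exact absurd ((hφ i).1 hEyx ((hmemA y).mp hyA i) hix) (by decide)
  · -- eJoin extends pJoin
    intro x a hx
    unfold pJoin at hx
    split_ifs at hx with h1 h2
    · rw [← hx]
      refine (hJt x).mpr ?_
      rintro ⟨y, hyB, hExy⟩
      obtain ⟨i, hix⟩ : ∃ i, φ i x = some true := by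
        simpa [pre1, Set.mem_iUnion, Set.mem_setOf_eq] using h1
      exact absurd ((hφ i).1 hExy hix ((hmemB y).mp hyB i)) (by decide)
    · rw [← hx]; exact (hJf x).mpr h2

end CanExt
end

section
/- Let (X,E,τ) be a graph with topology whose topology τ is T₁, and let (X,E) be its untopologised counterpart. Then every maximal partial morphism from (X,E,τ) to 2_τ is a maximal partial E-preserving map from (X,E) to 2; that is, MPM((X,E,τ),2_τ) ⊆ MPE(X,2). -/
namespace CanExt

open Classical

/-- Let `(X,E,t)` be a graph with topology whose topology is
`T₁`. Then every maximal partial morphism from `(X,E,t)` to `2_τ` is a maximal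
partial `E`-preserving map from `(X,E)` to `2`: `MPM((X,E,t),2_τ) ⊆ MPE(X,2)`. -/
theorem stmt_3 {X : Type*} (E : X → X → Prop) (hE : Reflexive E)
    (t : TopologicalSpace X) (hT1 : @T1Space X t)
    (φ : PMap X) (hφ : φ ∈ MPM E t) : φ ∈ MPE E := by
  obtain ⟨⟨hpres, h1, h0⟩, hmax⟩ := hφ
  refine ⟨hpres, fun ψ hψ hext => ?_⟩
  by_contra hne
  have hex : ∃ x a, φ x = none ∧ ψ x = some a := by
    by_contra h
    push_neg at h
    apply hne
    funext x
    cases hx : φ x with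
    | none =>
      cases hψx : ψ x with
      | none => rfl
      | some a => exact absurd hψx (h x a hx)
    | some a => exact (hext hx)
  obtain ⟨x, a, hx, hψx⟩ := hex
  set φ' : PMap X := fun y => if y = x then some a else φ y with hφ'def
  have hext' : PExt φ' φ := by
    intro y b hy
    simp only [hφ'def]
    split
    · next h => rw [h, hx] at hy; exact absurd hy (by simp)
    · exact hy
  have hsub : PExt ψ φ' := by
    intro y b hy
    simp only [hφ'def] at hy
    split at hy
    · next h => subst h; rw [hψx, hy]
    · exact hext hy
  have hpres' : EPres E φ' := fun u v huv c d hu hv =>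
    hψ huv (hsub hu) (hsub hv)
  have hval : ∀ b : Bool, pre1 (fun y => if y = x then some b else φ y)
      = (if b = true then insert x (pre1 φ) else pre1 φ \ {x}) := by
    intro b
    ext y
    simp only [pre1, Set.mem_setOf_eq]
    by_cases hy : y = x
    · subst hy
      cases b <;> simp
    · cases b <;> simp [hy]
  have hval0 : ∀ b : Bool, pre0 (fun y => if y = x then some b else φ y)
      = (if b = false then insert x (pre0 φ) else pre0 φ \ {x}) := by
    intro b
    ext y
    simp only [pre0, Set.mem_setOf_eq]
    by_cases hy : y = x
    · subst hy
      cases b <;> simp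
    · cases b <;> simp [hy]
  have hxnot1 : x ∉ pre1 φ := by simp [pre1, hx]
  have hxnot0 : x ∉ pre0 φ := by simp [pre0, hx]
  letI := t
  haveI := hT1
  have hc1 : IsClosed (pre1 φ') := by
    rw [hφ'def, hval a]
    cases a
    · simp only [if_neg Bool.false_ne_true]
      rw [Set.diff_singleton_eq_self hxnot1]; exact h1
    · simp only [if_pos rfl]; rw [Set.insert_eq]; exact (isClosed_singleton).union h1
  have hc0 : IsClosed (pre0 φ') := by
    rw [hφ'def, hval0 a]
    cases a
    · simp only [if_pos rfl]; rw [Set.insert_eq]; exact (isClosed_singleton).union h0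
    · simp only [Bool.true_eq_false, if_neg]
      rw [Set.diff_singleton_eq_self hxnot0]; exact h0
  have heq := hmax φ' ⟨hpres', hc1, hc0⟩ hext'
  have : φ' x = φ x := by rw [heq]
  simp [hφ'def, hx] at this

end CanExt
end

section
/- Let L be a bounded lattice and X = D♭(L). Then for each a ∈ L the evaluation map e_a belongs to MPE(X,2), and the map e : L → MPE(X,2) given by a ↦ e_a is an embedding of bounded lattices of L into the complete lattice (MPE(X,2), ≤); thus (e, MPE(X,2)) is a completion of L. -/
namespace CanExt

open Classical

section Aux

open scoped Classical

variable {X : Type*}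

/-- `rhoE E A` : points with no `E`-edge from `A`. -/
def rhoE (E : X → X → Prop) (A : Set X) : Set X := {y | ∀ x ∈ A, ¬ E x y}

/-- `lamE E B` : points with no `E`-edge into `B`. -/
def lamE (E : X → X → Prop) (B : Set X) : Set X := {x | ∀ y ∈ B, ¬ E x y}

/-- The canonical maximal partial `E`-preserving map associated to a set `A`. -/
noncomputable def mkE (E : X → X → Prop) (A : Set X) : PMap X :=
  fun x => if x ∈ A then some true else if x ∈ rhoE E A then some false else none

variable {E : X → X → Prop}

lemma rhoE_anti {A B : Set X} (h : A ⊆ B) : rhoE E B ⊆ rhoE E A :=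
  fun _ hy x hx => hy x (h hx)

lemma lamE_anti {A B : Set X} (h : A ⊆ B) : lamE E B ⊆ lamE E A :=
  fun _ hy x hx => hy x (h hx)

lemma subset_lamE_rhoE (A : Set X) : A ⊆ lamE E (rhoE E A) :=
  fun x hx y hy hE => hy x hx hE

lemma notMem_rhoE_self (hrefl : ∀ x, E x x) {A : Set X} {x : X} (hx : x ∈ A) :
    x ∉ rhoE E A := fun h => h x hx (hrefl x)

lemma pre1_mkE (A : Set X) : pre1 (mkE E A) = A := by
  ext x
  by_cases h : x ∈ A
  · simp [pre1, mkE, h]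
  · by_cases h2 : x ∈ rhoE E A <;> simp [pre1, mkE, h, h2]

lemma pre0_mkE (hrefl : ∀ x, E x x) (A : Set X) : pre0 (mkE E A) = rhoE E A := by
  ext x
  by_cases h : x ∈ A
  · simp [pre0, mkE, h]
    exact fun hc => (notMem_rhoE_self hrefl h hc).elim
  · by_cases h2 : x ∈ rhoE E A <;> simp [pre0, mkE, h, h2]

lemma mkE_mem_MPE (hrefl : ∀ x, E x x) {A : Set X}
    (hA : lamE E (rhoE E A) = A) : mkE E A ∈ MPE E := by
  constructor
  · -- E-preserving
    intro x y hxy a b hx hy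
    cases a with
    | false => exact Bool.false_le b
    | true =>
      cases b with
      | true => exact le_rfl
      | false =>
        exfalso
        have hxA : x ∈ A := by rw [← pre1_mkE (E := E) A]; exact hx
        have hyR : y ∈ rhoE E A := by rw [← pre0_mkE hrefl A]; exact hy
        exact hyR x hxA hxy
  · -- maximal
    intro ψ hψ hext
    funext x
    by_cases hxA : x ∈ A
    · have h1 : mkE E A x = some true := by simp [mkE, hxA]
      rw [h1, hext h1]
    by_cases hxR : x ∈ rhoE E A
    · have h1 : mkE E A x = some false := by simp [mkE, hxA, hxR]
      rw [h1, hext h1]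
    · have hnone : mkE E A x = none := by simp [mkE, hxA, hxR]
      rw [hnone]
      cases hv : ψ x with
      | none => rfl
      | some b =>
        exfalso
        cases b with
        | true =>
          apply hxA
          rw [← hA]
          intro y hy hE
          have hyA : y ∉ A := fun h => notMem_rhoE_self hrefl h hy
          have hy0 : ψ y = some false := hext (by simp [mkE, hyA, hy])
          have := hψ hE hv hy0
          exact absurd this (by decide)
        | false =>
          apply hxR
          intro z hz hE
          have hz1 : ψ z = some true := hext (by simp [mkE, hz])
          have := hψ hE hz1 hv
          exact absurd this (by decide)

lemma MPE_eq_mkE (hrefl : ∀ x, E x x) {φ : PMap X} (hφ : φ ∈ MPE E) :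
    lamE E (rhoE E (pre1 φ)) = pre1 φ ∧ φ = mkE E (pre1 φ) := by
  obtain ⟨hpres, hmax⟩ := hφ
  have hBsub : pre0 φ ⊆ rhoE E (pre1 φ) := by
    intro y hy x hx hE
    have := hpres hE hx hy
    exact absurd this (by decide)
  have hAsub : pre1 φ ⊆ lamE E (pre0 φ) := by
    intro x hx y hy hE
    have := hpres hE hx hy
    exact absurd this (by decide)
  -- rho A ⊆ B via maximality
  have hRB : rhoE E (pre1 φ) ⊆ pre0 φ := by
    intro y hyR
    by_contra hyB
    have hyA : y ∉ pre1 φ := fun h => notMem_rhoE_self hrefl h hyR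
    have hynone : φ y = none := by
      cases h : φ y with
      | none => rfl
      | some b =>
        cases b with
        | true => exact (hyA h).elim
        | false => exact (hyB h).elim
    set ψ : PMap X := Function.update φ y (some false) with hψdef
    have hψpres : EPres E ψ := by
      intro u v hE a b hu hv
      by_cases huy : u = y
      · subst huy
        have : a = false := by
          simp [hψdef, Function.update] at hu; exact hu
        subst this; exact Bool.false_le b
      · by_cases hvy : v = y
        · subst hvy
          have hb : b = false := by
            simp [hψdef, Function.update] at hv; exact hv
          subst hb
          have hu' : φ u = some a := by
            simpa [hψdef, Function.update, huy] using hu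
          cases a with
          | false => exact le_rfl
          | true => exact (hyR u hu' hE).elim
        · have hu' : φ u = some a := by
            simpa [hψdef, Function.update, huy] using hu
          have hv' : φ v = some b := by
            simpa [hψdef, Function.update, hvy] using hv
          exact hpres hE hu' hv'
    have hψext : PExt ψ φ := by
      intro x a hx
      have hxy : x ≠ y := fun h => by rw [h, hynone] at hx; cases hx
      simpa [hψdef, Function.update, hxy] using hx
    have := hmax ψ hψpres hψext
    apply hyB
    show φ y = some false
    rw [← this]
    simp [hψdef, Function.update]
  have hLA : lamE E (pre0 φ) ⊆ pre1 φ := by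
    intro x hxL
    by_contra hxA
    have hxB : x ∉ pre0 φ := fun h => hxL x h (hrefl x)
    have hxnone : φ x = none := by
      cases h : φ x with
      | none => rfl
      | some b =>
        cases b with
        | true => exact (hxA h).elim
        | false => exact (hxB h).elim
    set ψ : PMap X := Function.update φ x (some true) with hψdef
    have hψpres : EPres E ψ := by
      intro u v hE a b hu hv
      by_cases hvx : v = x
      · subst hvx
        have : b = true := by
          simp [hψdef, Function.update] at hv; exact hv
        subst this; exact Bool.le_true a
      · by_cases hux : u = x
        · subst hux
          have ha : a = true := by
            simp [hψdef, Function.update] at hu; exact hu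
          subst ha
          have hv' : φ v = some b := by
            simpa [hψdef, Function.update, hvx] using hv
          cases b with
          | true => exact le_rfl
          | false => exact (hxL v hv' hE).elim
        · have hu' : φ u = some a := by
            simpa [hψdef, Function.update, hux] using hu
          have hv' : φ v = some b := by
            simpa [hψdef, Function.update, hvx] using hv
          exact hpres hE hu' hv'
    have hψext : PExt ψ φ := by
      intro z a hz
      have hzx : z ≠ x := fun h => by rw [h, hxnone] at hz; cases hz
      simpa [hψdef, Function.update, hzx] using hz
    have := hmax ψ hψpres hψext
    apply hxA
    show φ x = some true
    rw [← this]
    simp [hψdef, Function.update]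
  have hB : pre0 φ = rhoE E (pre1 φ) := le_antisymm hBsub hRB
  have hA : lamE E (rhoE E (pre1 φ)) = pre1 φ := by
    rw [← hB]; exact le_antisymm hLA hAsub
  refine ⟨hA, ?_⟩
  funext z
  by_cases hz1 : z ∈ pre1 φ
  · rw [hz1]; simp [mkE, hz1]
  by_cases hz0 : z ∈ pre0 φ
  · rw [hz0]
    have : z ∈ rhoE E (pre1 φ) := hB ▸ hz0
    simp [mkE, hz1, this]
  · have : φ z = none := by
      cases h : φ z with
      | none => rfl
      | some b => cases b with
        | true => exact (hz1 h).elim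
        | false => exact (hz0 h).elim
    rw [this]
    have hzr : z ∉ rhoE E (pre1 φ) := fun h => hz0 (hB ▸ h)
    simp [mkE, hz1, hzr]

lemma closed_biInter (hrefl : ∀ x, E x x)
    {ι : Sort*} {A : ι → Set X} (hA : ∀ i, lamE E (rhoE E (A i)) = A i) :
    lamE E (rhoE E (⋂ i, A i)) = ⋂ i, A i := by
  apply le_antisymm
  · intro x hx
    apply Set.mem_iInter.2
    intro i
    rw [← hA i]
    exact lamE_anti (rhoE_anti (Set.iInter_subset A i)) hx
  · exact subset_lamE_rhoE _

end Aux

section LatAux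

open scoped Classical

variable {L : Type*} [Lattice L] [BoundedOrder L]

/-- A disjoint filter–ideal pair in a bounded lattice. -/
structure PairFI (F I : Set L) : Prop where
  upF : ∀ ⦃a b : L⦄, a ∈ F → a ≤ b → b ∈ F
  infF : ∀ ⦃a b : L⦄, a ∈ F → b ∈ F → a ⊓ b ∈ F
  downI : ∀ ⦃a b : L⦄, a ∈ I → b ≤ a → b ∈ I
  supI : ∀ ⦃a b : L⦄, a ∈ I → b ∈ I → a ⊔ b ∈ I
  topF : (⊤ : L) ∈ F
  botI : (⊥ : L) ∈ I
  disj : ∀ ⦃x : L⦄, x ∈ F → x ∈ I → False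

/-- The partial map determined by a filter–ideal pair. -/
noncomputable def pairMap (F I : Set L) : PMap L :=
  fun x => if x ∈ F then some true else if x ∈ I then some false else none

lemma pairMap_eq_true {F I : Set L} {x : L} (hx : x ∈ F) :
    pairMap F I x = some true := by simp [pairMap, hx]

lemma pairMap_eq_false {F I : Set L} (h : PairFI F I) {x : L} (hx : x ∈ I) :
    pairMap F I x = some false := by
  have : x ∉ F := fun hF => h.disj hF hx
  simp [pairMap, this, hx]

lemma pre1_pairMap {F I : Set L} : pre1 (pairMap F I) = F := by
  ext x
  by_cases h : x ∈ F
  · simp [pre1, pairMap, h]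
  · by_cases h2 : x ∈ I <;> simp [pre1, pairMap, h, h2]

lemma pre0_pairMap {F I : Set L} (h : PairFI F I) : pre0 (pairMap F I) = I := by
  ext x
  by_cases hF : x ∈ F
  · simp [pre0, pairMap, hF]
    exact fun hI => (h.disj hF hI).elim
  · by_cases hI : x ∈ I <;> simp [pre0, pairMap, hF, hI]

lemma pairMap_PHom {F I : Set L} (h : PairFI F I) : PHom L (pairMap F I) := by
  refine ⟨pairMap_eq_false h h.botI, pairMap_eq_true h.topF, ?_⟩
  intro a b x y hx hy
  have hmem : ∀ {c : L} {u : Bool}, pairMap F I c = some u →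
      (u = true ∧ c ∈ F) ∨ (u = false ∧ c ∈ I) := by
    intro c u hc
    by_cases hF : c ∈ F
    · left; refine ⟨?_, hF⟩
      rw [pairMap_eq_true hF] at hc; exact (Option.some_inj.1 hc).symm
    · by_cases hI : c ∈ I
      · right; refine ⟨?_, hI⟩
        simp [pairMap, hF, hI] at hc; exact hc
      · simp [pairMap, hF, hI] at hc
  rcases hmem hx with ⟨rfl, haF⟩ | ⟨rfl, haI⟩ <;>
    rcases hmem hy with ⟨rfl, hbF⟩ | ⟨rfl, hbI⟩
  · exact ⟨by simpa using pairMap_eq_true (h.infF haF hbF),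
      by simpa using pairMap_eq_true (h.upF haF le_sup_left)⟩
  · exact ⟨by simpa using pairMap_eq_false h (h.downI hbI inf_le_right),
      by simpa using pairMap_eq_true (h.upF haF le_sup_left)⟩
  · exact ⟨by simpa using pairMap_eq_false h (h.downI haI inf_le_left),
      by simpa using pairMap_eq_true (h.upF hbF le_sup_right)⟩
  · exact ⟨by simpa using pairMap_eq_false h (h.downI haI inf_le_left),
      by simpa using pairMap_eq_false h (h.supI haI hbI)⟩

/-- Up-closure of `f⁻¹(1)`. -/
def upCl (f : PMap L) : Set L := {v | ∃ u, f u = some true ∧ u ≤ v}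

/-- Down-closure of `f⁻¹(0)`. -/
def dnCl (f : PMap L) : Set L := {v | ∃ w, f w = some false ∧ v ≤ w}

lemma phom_closure {f : PMap L} (hf : PHom L f) :
    PairFI (upCl f) (dnCl f) ∧ PExt (pairMap (upCl f) (dnCl f)) f := by
  have hdisj : ∀ ⦃x : L⦄, x ∈ upCl f → x ∈ dnCl f → False := by
    rintro x ⟨u, hu, hux⟩ ⟨w, hw, hxw⟩
    have huw : u ≤ w := hux.trans hxw
    have h1 := (hf.2.2 hu hw).2
    rw [sup_eq_right.mpr huw] at h1
    rw [hw] at h1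
    simp at h1
  have hpair : PairFI (upCl f) (dnCl f) := by
    refine ⟨?_, ?_, ?_, ?_, ⟨⊤, hf.2.1, le_rfl⟩, ⟨⊥, hf.1, le_rfl⟩, hdisj⟩
    · rintro a b ⟨u, hu, hua⟩ hab; exact ⟨u, hu, hua.trans hab⟩
    · rintro a b ⟨u, hu, hua⟩ ⟨v, hv, hvb⟩
      refine ⟨u ⊓ v, ?_, inf_le_inf hua hvb⟩
      have := (hf.2.2 hu hv).1
      simpa using this
    · rintro a b ⟨w, hw, haw⟩ hba; exact ⟨w, hw, hba.trans haw⟩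
    · rintro a b ⟨w, hw, haw⟩ ⟨v, hv, hbv⟩
      refine ⟨w ⊔ v, ?_, sup_le_sup haw hbv⟩
      have := (hf.2.2 hw hv).2
      simpa using this
  refine ⟨hpair, ?_⟩
  intro x a hx
  cases a with
  | true => exact pairMap_eq_true ⟨x, hx, le_rfl⟩
  | false => exact pairMap_eq_false hpair ⟨x, hx, le_rfl⟩

/-- Any MPH is the map of its closure pair. -/
lemma MPH_eq_pairMap {f : PMap L} (hf : f ∈ MPHset L) :
    pairMap (upCl f) (dnCl f) = f :=
  hf.2 _ (pairMap_PHom (phom_closure hf.1).1) (phom_closure hf.1).2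

lemma MPH_up {f : PMap L} (hf : f ∈ MPHset L) {u v : L}
    (hu : f u = some true) (huv : u ≤ v) : f v = some true := by
  rw [← MPH_eq_pairMap hf]
  exact pairMap_eq_true ⟨u, hu, huv⟩

lemma MPH_down {f : PMap L} (hf : f ∈ MPHset L) {u v : L}
    (hu : f u = some false) (hvu : v ≤ u) : f v = some false := by
  rw [← MPH_eq_pairMap hf]
  exact pairMap_eq_false (phom_closure hf.1).1 ⟨u, hu, hvu⟩

lemma MPH_pairFI {f : PMap L} (hf : f ∈ MPHset L) : PairFI (pre1 f) (pre0 f) := by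
  have h := (phom_closure hf.1).1
  have h1 : pre1 f = upCl f := by
    conv_lhs => rw [← MPH_eq_pairMap hf]
    exact pre1_pairMap
  have h0 : pre0 f = dnCl f := by
    conv_lhs => rw [← MPH_eq_pairMap hf]
    exact pre0_pairMap h
  rw [h1, h0]; exact h

/-- Maximal pairs give maximal partial homomorphisms. -/
lemma maximal_pair_MPH {F I : Set L} (h : PairFI F I)
    (hmax : ∀ F' I', PairFI F' I' → F ⊆ F' → I ⊆ I' → F' = F ∧ I' = I) :
    pairMap F I ∈ MPHset L := by
  refine ⟨pairMap_PHom h, ?_⟩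
  intro g hg hext
  obtain ⟨hgpair, hgext⟩ := phom_closure hg
  have hF : F ⊆ upCl g := fun x hx => ⟨x, hext (pairMap_eq_true hx), le_rfl⟩
  have hI : I ⊆ dnCl g := fun x hx => ⟨x, hext (pairMap_eq_false h hx), le_rfl⟩
  obtain ⟨hFeq, hIeq⟩ := hmax _ _ hgpair hF hI
  funext x
  cases hgx : g x with
  | none =>
    by_cases hxF : x ∈ F
    · rw [hext (pairMap_eq_true hxF)] at hgx; cases hgx
    by_cases hxI : x ∈ I
    · rw [hext (pairMap_eq_false h hxI)] at hgx; cases hgx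
    · simp [pairMap, hxF, hxI]
  | some b =>
    cases b with
    | true =>
      have : x ∈ F := hFeq ▸ (⟨x, hgx, le_rfl⟩ : x ∈ upCl g)
      exact (pairMap_eq_true this).symm
    | false =>
      have : x ∈ I := hIeq ▸ (⟨x, hgx, le_rfl⟩ : x ∈ dnCl g)
      exact (pairMap_eq_false h this).symm

/-- Zorn: every disjoint pair extends to a maximal disjoint pair, hence to an MPH. -/
lemma exists_MPH_extending {F I : Set L} (h : PairFI F I) :
    ∃ g : PMap L, g ∈ MPHset L ∧ F ⊆ pre1 g ∧ I ⊆ pre0 g := by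
  set S : Set (Set L × Set L) := {p | PairFI p.1 p.2 ∧ F ⊆ p.1 ∧ I ⊆ p.2} with hS
  have hZ : ∀ c ⊆ S, IsChain (· ≤ ·) c → ∀ y ∈ c, ∃ ub ∈ S, ∀ z ∈ c, z ≤ ub := by
    intro c hc hchain y hy
    refine ⟨(⋃ p ∈ c, p.1, ⋃ p ∈ c, p.2), ⟨?_, ?_, ?_⟩, ?_⟩
    · constructor
      · rintro a b ha hab
        simp only [Set.mem_iUnion] at ha ⊢
        obtain ⟨p, hp, hap⟩ := ha
        exact ⟨p, hp, (hc hp).1.upF hap hab⟩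
      · rintro a b ha hb
        simp only [Set.mem_iUnion] at ha hb ⊢
        obtain ⟨p, hp, hap⟩ := ha
        obtain ⟨q, hq, hbq⟩ := hb
        rcases hchain.total hp hq with hpq | hqp
        · exact ⟨q, hq, (hc hq).1.infF (hpq.1 hap) hbq⟩
        · exact ⟨p, hp, (hc hp).1.infF hap (hqp.1 hbq)⟩
      · rintro a b ha hab
        simp only [Set.mem_iUnion] at ha ⊢
        obtain ⟨p, hp, hap⟩ := ha
        exact ⟨p, hp, (hc hp).1.downI hap hab⟩
      · rintro a b ha hb
        simp only [Set.mem_iUnion] at ha hb ⊢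
        obtain ⟨p, hp, hap⟩ := ha
        obtain ⟨q, hq, hbq⟩ := hb
        rcases hchain.total hp hq with hpq | hqp
        · exact ⟨q, hq, (hc hq).1.supI (hpq.2 hap) hbq⟩
        · exact ⟨p, hp, (hc hp).1.supI hap (hqp.2 hbq)⟩
      · simp only [Set.mem_iUnion]
        exact ⟨y, hy, (hc hy).1.topF⟩
      · simp only [Set.mem_iUnion]
        exact ⟨y, hy, (hc hy).1.botI⟩
      · rintro x hxF hxI
        simp only [Set.mem_iUnion] at hxF hxI
        obtain ⟨p, hp, hxp⟩ := hxF
        obtain ⟨q, hq, hxq⟩ := hxI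
        rcases hchain.total hp hq with hpq | hqp
        · exact (hc hq).1.disj (hpq.1 hxp) hxq
        · exact (hc hp).1.disj hxp (hqp.2 hxq)
    · exact (hc hy).2.1.trans (Set.subset_biUnion_of_mem hy)
    · exact (hc hy).2.2.trans (Set.subset_biUnion_of_mem hy)
    · intro p hp
      exact ⟨Set.subset_biUnion_of_mem hp, Set.subset_biUnion_of_mem hp⟩
  obtain ⟨m, hFm, hm⟩ := zorn_le_nonempty₀ S hZ (F, I) ⟨h, subset_rfl, subset_rfl⟩
  obtain ⟨⟨hmp, hmF, hmI⟩, hmmax⟩ := hm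
  have hmax : ∀ F' I', PairFI F' I' → m.1 ⊆ F' → m.2 ⊆ I' → F' = m.1 ∧ I' = m.2 := by
    intro F' I' hp hF' hI'
    have hmem : (F', I') ∈ S := ⟨hp, hmF.trans hF', hmI.trans hI'⟩
    have := hmmax hmem ⟨hF', hI'⟩
    exact ⟨le_antisymm this.1 hF', le_antisymm this.2 hI'⟩
  refine ⟨pairMap m.1 m.2, maximal_pair_MPH hmp hmax, ?_, ?_⟩
  · rw [pre1_pairMap]; exact hmF
  · rw [pre0_pairMap hmp]; exact hmI

end LatAux

section EvalAux

open scoped Classical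

variable {L : Type*} [Lattice L] [BoundedOrder L]

lemma EM_refl (f : MPHsub L) : EM L f f := by
  intro x a b h1 h2
  rw [h1] at h2
  cases h2
  exact le_rfl

/-- From an MPH `f` and `a ∉ f⁻¹(1)` we get an MPH `g` with `g a = 0` and
no conflict `f = 1 / g = 0`. -/
lemma exists_below (f : MPHsub L) {a : L} (ha : f.1 a ≠ some true) :
    ∃ g : MPHsub L, g.1 a = some false ∧ EM L f g := by
  have hp := MPH_pairFI f.2
  have hpair : PairFI (pre1 f.1) (Set.Iic a) := by
    refine ⟨hp.upF, hp.infF, fun x y hx hyx => hyx.trans hx,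
      fun x y hx hy => sup_le hx hy, hp.topF, bot_le, ?_⟩
    intro x hxF hxa
    exact ha (MPH_up f.2 hxF hxa)
  obtain ⟨g, hg, hgF, hgI⟩ := exists_MPH_extending hpair
  refine ⟨⟨g, hg⟩, hgI (le_refl a), ?_⟩
  intro x u v hfx hgx
  have hgx : g x = some v := hgx
  cases u with
  | false => exact Bool.false_le v
  | true =>
    have : g x = some true := hgF hfx
    rw [this] at hgx
    cases hgx
    exact le_rfl

lemma exists_above (f : MPHsub L) {a : L} (ha : f.1 a ≠ some false) :
    ∃ g : MPHsub L, g.1 a = some true ∧ EM L g f := by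
  have hp := MPH_pairFI f.2
  have hpair : PairFI (Set.Ici a) (pre0 f.1) := by
    refine ⟨fun x y hx hxy => hx.trans hxy, fun x y hx hy => le_inf hx hy,
      hp.downI, hp.supI, le_top, hp.botI, ?_⟩
    intro x hxa hxI
    exact ha (MPH_down f.2 hxI hxa)
  obtain ⟨g, hg, hgF, hgI⟩ := exists_MPH_extending hpair
  refine ⟨⟨g, hg⟩, hgF (le_refl a), ?_⟩
  intro x u v hgx hfx
  have hgx : g x = some u := hgx
  cases u with
  | false => exact Bool.false_le v
  | true =>
    cases v with
    | true => exact le_rfl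
    | false =>
      have : g x = some false := hgI hfx
      rw [this] at hgx
      simp at hgx

lemma evalM_mem_MPE (a : L) : evalM L a ∈ MPE (EM L) := by
  constructor
  · intro f g hfg u v hf hg
    exact hfg hf hg
  · intro ψ hψ hext
    funext f
    cases hfa : f.1 a with
    | some v =>
      have h1 : evalM L a f = some v := hfa
      rw [h1, hext h1]
    | none =>
      show ψ f = evalM L a f
      have h0 : evalM L a f = none := hfa
      rw [h0]
      cases hv : ψ f with
      | none => rfl
      | some b =>
        exfalso
        cases b with
        | true =>
          obtain ⟨g, hga, hfg⟩ := exists_below f (by rw [hfa]; simp)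
          have hψg : ψ g = some false := hext hga
          have := hψ hfg hv hψg
          exact absurd this (by decide)
        | false =>
          obtain ⟨g, hga, hgf⟩ := exists_above f (by rw [hfa]; simp)
          have hψg : ψ g = some true := hext hga
          have := hψ hgf hψg hv
          exact absurd this (by decide)

end EvalAux

section Main

open scoped Classical

variable (L : Type*) [Lattice L] [BoundedOrder L]

/-- The partial order on `CX L` given by `φ ≤ ψ ↔ φ⁻¹(1) ⊆ ψ⁻¹(1)`. -/
noncomputable def cxPO : PartialOrder (CX L) where
  le φ ψ := pre1 φ.1 ⊆ pre1 ψ.1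
  le_refl _ := subset_rfl
  le_trans _ _ _ h1 h2 := Set.Subset.trans h1 h2
  le_antisymm φ ψ h1 h2 := by
    apply Subtype.ext
    have h3 : pre1 φ.1 = pre1 ψ.1 := Set.Subset.antisymm h1 h2
    rw [(MPE_eq_mkE EM_refl φ.2).2, (MPE_eq_mkE EM_refl ψ.2).2, h3]

noncomputable def cxInfSet : InfSet (CX L) :=
  ⟨fun S => ⟨mkE (EM L) (⋂ φ : S, pre1 (φ : CX L).1),
    mkE_mem_MPE EM_refl
      (closed_biInter EM_refl fun φ : S => (MPE_eq_mkE EM_refl (φ : CX L).2).1)⟩⟩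

/-- The complete lattice structure on `CX L`. -/
noncomputable def cxCL : CompleteLattice (CX L) := by
  letI := cxPO L
  letI := cxInfSet L
  refine completeLatticeOfInf (CX L) ?_
  intro S
  have hpre : pre1 (sInf S : CX L).1 = ⋂ φ : S, pre1 (φ : CX L).1 :=
    pre1_mkE (E := EM L) (⋂ φ : S, pre1 (φ : CX L).1)
  constructor
  · intro φ hφ
    show pre1 (sInf S : CX L).1 ⊆ pre1 φ.1
    rw [hpre]
    exact Set.iInter_subset _ (⟨φ, hφ⟩ : S)
  · intro ψ hψ
    show pre1 ψ.1 ⊆ pre1 (sInf S : CX L).1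
    rw [hpre]
    exact Set.subset_iInter fun φ => hψ φ.2

variable {L}

lemma W_mono {a b : L} (hab : a ≤ b) : pre1 (evalM L a) ⊆ pre1 (evalM L b) :=
  fun f hf => MPH_up f.2 hf hab

lemma W_le_iff {a b : L} : pre1 (evalM L a) ⊆ pre1 (evalM L b) ↔ a ≤ b := by
  refine ⟨?_, W_mono⟩
  intro h
  by_contra hab
  have hpair : PairFI (Set.Ici a) (Set.Iic b) := by
    refine ⟨fun x y hx hxy => hx.trans hxy, fun x y hx hy => le_inf hx hy,
      fun x y hx hyx => hyx.trans hx, fun x y hx hy => sup_le hx hy,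
      le_top, bot_le, ?_⟩
    intro x hax hxb
    exact hab (hax.trans hxb)
  obtain ⟨g, hg, hgF, hgI⟩ := exists_MPH_extending hpair
  have h1 : (⟨g, hg⟩ : MPHsub L) ∈ pre1 (evalM L a) := hgF (le_refl a)
  have h2 := h h1
  have h3 : g b = some false := hgI (le_refl b)
  have h4 : g b = some true := h2
  rw [h3] at h4
  simp at h4

lemma W_sup_subset {a b : L} {C : Set (MPHsub L)}
    (hC : lamE (EM L) (rhoE (EM L) C) = C)
    (ha : pre1 (evalM L a) ⊆ C) (hb : pre1 (evalM L b) ⊆ C) :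
    pre1 (evalM L (a ⊔ b)) ⊆ C := by
  intro g hg
  rw [← hC]
  intro h hh hEgh
  have hgab : g.1 (a ⊔ b) = some true := hg
  have hne : h.1 a ≠ some false ∨ h.1 b ≠ some false := by
    by_contra hcon
    push_neg at hcon
    have hab : h.1 (a ⊔ b) = some false := by
      have := (h.2.1.2.2 hcon.1 hcon.2).2
      simpa using this
    have := hEgh hgab hab
    exact absurd this (by decide)
  rcases hne with hna | hnb
  · obtain ⟨k, hka, hkh⟩ := exists_above h hna
    exact hh k (ha hka) hkh
  · obtain ⟨k, hkb, hkh⟩ := exists_above h hnb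
    exact hh k (hb hkb) hkh

end Main

/-- For a bounded lattice `L` and `X = D♭(L)`: every
evaluation map `e_a` belongs to `MPE(X,2)`, and `a ↦ e_a` is an embedding of
bounded lattices of `L` into the complete lattice `(MPE(X,2), ≤)`; thus
`(e, MPE(X,2))` is a completion of `L`. -/
theorem stmt_4 (L : Type*) [Lattice L] [BoundedOrder L] :
    (∀ a : L, evalM L a ∈ MPE (EM L)) ∧
    ∃ inst : CompleteLattice (CX L),
      (∀ φ ψ : CX L, inst.le φ ψ ↔ pre1 φ.1 ⊆ pre1 ψ.1) ∧
      ∃ e : L → CX L,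
        (∀ a : L, (e a).1 = evalM L a) ∧
        Function.Injective e ∧
        (∀ a b : L, e (a ⊓ b) = inst.inf (e a) (e b)) ∧
        (∀ a b : L, e (a ⊔ b) = inst.sup (e a) (e b)) ∧
        e ⊤ = inst.top ∧ e ⊥ = inst.bot := by
  refine ⟨fun a => evalM_mem_MPE a, cxCL L, fun φ ψ => Iff.rfl,
    fun a => ⟨evalM L a, evalM_mem_MPE a⟩, fun a => rfl, ?_, ?_, ?_, ?_, ?_⟩
  · -- injective
    intro a b hab
    have h := congrArg (fun φ : CX L => pre1 φ.1) hab
    exact le_antisymm (W_le_iff.1 h.le) (W_le_iff.1 h.ge)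
  · -- inf
    intro a b
    letI := cxCL L
    set ea : CX L := ⟨evalM L a, evalM_mem_MPE a⟩
    set eb : CX L := ⟨evalM L b, evalM_mem_MPE b⟩
    refine le_antisymm (le_inf (W_mono inf_le_left) (W_mono inf_le_right)) ?_
    have h1 := @inf_le_left (CX L) _ ea eb
    have h2 := @inf_le_right (CX L) _ ea eb
    intro f hf
    have hfa : f.1 a = some true := h1 hf
    have hfb : f.1 b = some true := h2 hf
    have h3 := (f.2.1.2.2 hfa hfb).1
    show f.1 (a ⊓ b) = some true
    simpa using h3
  · -- sup
    intro a b
    letI := cxCL L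
    set ea : CX L := ⟨evalM L a, evalM_mem_MPE a⟩
    set eb : CX L := ⟨evalM L b, evalM_mem_MPE b⟩
    refine le_antisymm ?_ (sup_le (W_mono le_sup_left) (W_mono le_sup_right))
    have h1 := @le_sup_left (CX L) _ ea eb
    have h2 := @le_sup_right (CX L) _ ea eb
    exact W_sup_subset (MPE_eq_mkE EM_refl (ea ⊔ eb).2).1 h1 h2
  · -- top
    letI := cxCL L
    refine le_antisymm ((cxCL L).le_top _) ?_
    intro f _
    exact f.2.1.2.1
  · -- bot
    letI := cxCL L
    refine le_antisymm ?_ ((cxCL L).bot_le _)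
    intro f hf
    exfalso
    have h1 : f.1 ⊥ = some true := hf
    rw [f.2.1.1] at h1
    simp at h1


end CanExt
end

section
/- Let L be a bounded lattice, X = D♭(L), φ ∈ MPE(X,2) and f ∈ MPH(L,2_B). Then (i) if f ∉ φ⁻¹(0) then there exists g ∈ φ⁻¹(1) with f ≤₂ g, and (ii) if f ∉ φ⁻¹(1) then there exists g ∈ φ⁻¹(0) with f ≤₁ g. -/
namespace CanExt

open Classical

section Aux

variable {L : Type*} [Lattice L] [BoundedOrder L]

omit [Lattice L] [BoundedOrder L] in
lemma pext_trans {g h k : PMap L} (h1 : PExt g h) (h2 : PExt h k) : PExt g k :=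
  fun _ _ ha => h1 (h2 ha)

/-- Zorn: every partial homomorphism extends to a maximal one. -/
lemma exists_mph_ext (h : PMap L) (hh : PHom L h) :
    ∃ k, k ∈ MPHset L ∧ PExt k h := by
  classical
  let T := {g : PMap L // PHom L g ∧ PExt g h}
  let r : T → T → Prop := fun a b => PExt b.1 a.1
  have hchain : ∀ c : Set T, IsChain r c → ∃ ub, ∀ a ∈ c, r a ub := by
    intro c hc
    rcases Set.eq_empty_or_nonempty c with hce | ⟨g₀, hg₀⟩
    · exact ⟨⟨h, hh, fun _ _ ha => ha⟩, by simp [hce]⟩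
    · have uniq : ∀ {x : L} {a b : Bool}, (∃ g ∈ c, (g : T).1 x = some a) →
          (∃ g ∈ c, (g : T).1 x = some b) → a = b := by
        rintro x a b ⟨g1, hg1, hx1⟩ ⟨g2, hg2, hx2⟩
        by_cases hgg : g1 = g2
        · subst hgg; rw [hx1] at hx2; exact Option.some.inj hx2
        · rcases hc hg1 hg2 hgg with hr | hr
          · rw [hr hx1] at hx2; exact Option.some.inj hx2
          · rw [hr hx2] at hx1; exact (Option.some.inj hx1).symm
      let U : PMap L := fun x =>
        if hx : ∃ a : Bool, ∃ g ∈ c, (g : T).1 x = some a then some hx.choose else none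
      have hmem : ∀ {x : L} {a : Bool}, (∃ g ∈ c, (g : T).1 x = some a) → U x = some a := by
        intro x a hx
        have hex : ∃ b : Bool, ∃ g ∈ c, (g : T).1 x = some b := ⟨a, hx⟩
        have h1 : U x = some hex.choose := dif_pos hex
        rw [h1]
        exact congrArg some (uniq hex.choose_spec hx)
      have hmem' : ∀ {x : L} {a : Bool}, U x = some a → ∃ g ∈ c, (g : T).1 x = some a := by
        intro x a hU
        by_cases hex : ∃ b : Bool, ∃ g ∈ c, (g : T).1 x = some b
        · have : U x = some hex.choose := dif_pos hex
          rw [this] at hU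
          exact (Option.some.inj hU) ▸ hex.choose_spec
        · have : U x = none := dif_neg hex
          rw [this] at hU; cases hU
      have hUphom : PHom L U := by
        refine ⟨hmem ⟨g₀, hg₀, g₀.2.1.1⟩, hmem ⟨g₀, hg₀, g₀.2.1.2.1⟩, ?_⟩
        intro a b x y hxa hyb
        obtain ⟨g1, hg1, h1⟩ := hmem' hxa
        obtain ⟨g2, hg2, h2⟩ := hmem' hyb
        obtain ⟨g3, hg3, e1, e2⟩ : ∃ g3 ∈ c, (g3 : T).1 a = some x ∧ (g3 : T).1 b = some y := by
          by_cases hgg : g1 = g2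
          · subst hgg; exact ⟨g1, hg1, h1, h2⟩
          · rcases hc hg1 hg2 hgg with hr | hr
            · exact ⟨g2, hg2, hr h1, h2⟩
            · exact ⟨g1, hg1, h1, hr h2⟩
        obtain ⟨e3, e4⟩ := g3.2.1.2.2 e1 e2
        exact ⟨hmem ⟨g3, hg3, e3⟩, hmem ⟨g3, hg3, e4⟩⟩
      have hUext : PExt U h := fun x a hx => hmem ⟨g₀, hg₀, g₀.2.2 hx⟩
      exact ⟨⟨U, hUphom, hUext⟩, fun a ha x v hv => hmem ⟨a, ha, hv⟩⟩
  obtain ⟨m, hm⟩ := exists_maximal_of_chains_bounded hchain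
    (fun {a b c} hab hbc => pext_trans hbc hab)
  refine ⟨m.1, ⟨m.2.1, ?_⟩, m.2.2⟩
  intro g hg hext
  have h2 : PExt m.1 g := hm ⟨g, hg, pext_trans hext m.2.2⟩ hext
  funext x
  rcases hgx : g x with _ | b
  · rcases hmx : m.1 x with _ | b'
    · rfl
    · rw [hext hmx] at hgx; exact nomatch hgx
  · rw [h2 hgx]

/-- A disjoint filter/ideal pair gives a partial homomorphism. -/
lemma pair_phom (F I : Set L)
    (hFtop : ⊤ ∈ F) (hIbot : ⊥ ∈ I)
    (hFup : ∀ ⦃a x : L⦄, a ∈ F → a ≤ x → x ∈ F)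
    (hFmeet : ∀ ⦃a b : L⦄, a ∈ F → b ∈ F → a ⊓ b ∈ F)
    (hIdown : ∀ ⦃a x : L⦄, a ∈ I → x ≤ a → x ∈ I)
    (hIjoin : ∀ ⦃a b : L⦄, a ∈ I → b ∈ I → a ⊔ b ∈ I)
    (hdisj : ∀ x, x ∈ F → x ∈ I → False) :
    PHom L (fun x => if x ∈ F then some true else if x ∈ I then some false else none) := by
  classical
  have hT : ∀ {x : L}, x ∈ F →
      (if x ∈ F then some true else if x ∈ I then some false else none) = some true :=
    fun hx => if_pos hx
  have hFa : ∀ {x : L}, x ∈ I →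
      (if x ∈ F then some true else if x ∈ I then some false else none) = some false := by
    intro x hx
    rw [if_neg (fun h => hdisj _ h hx), if_pos hx]
  have hinv : ∀ {x : L} {b : Bool},
      (if x ∈ F then some true else if x ∈ I then some false else none) = some b →
      (b = true ∧ x ∈ F) ∨ (b = false ∧ x ∈ I) := by
    intro x b hxb
    by_cases h1 : x ∈ F
    · rw [hT h1] at hxb; exact Or.inl ⟨(Option.some.inj hxb).symm, h1⟩
    · by_cases h2 : x ∈ I
      · rw [hFa h2] at hxb; exact Or.inr ⟨(Option.some.inj hxb).symm, h2⟩
      · rw [if_neg h1, if_neg h2] at hxb; exact nomatch hxb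
  refine ⟨hFa hIbot, hT hFtop, ?_⟩
  intro a b x y hax hby
  rcases hinv hax with ⟨rfl, ha⟩ | ⟨rfl, ha⟩ <;> rcases hinv hby with ⟨rfl, hb⟩ | ⟨rfl, hb⟩
  · exact ⟨by rw [show (true ⊓ true : Bool) = true by decide]; exact hT (hFmeet ha hb),
      by rw [show (true ⊔ true : Bool) = true by decide]; exact hT (hFup ha le_sup_left)⟩
  · exact ⟨by rw [show (true ⊓ false : Bool) = false by decide]; exact hFa (hIdown hb inf_le_right),
      by rw [show (true ⊔ false : Bool) = true by decide]; exact hT (hFup ha le_sup_left)⟩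
  · exact ⟨by rw [show (false ⊓ true : Bool) = false by decide]; exact hFa (hIdown ha inf_le_left),
      by rw [show (false ⊔ true : Bool) = true by decide]; exact hT (hFup hb le_sup_right)⟩
  · exact ⟨by rw [show (false ⊓ false : Bool) = false by decide]; exact hFa (hIdown ha inf_le_left),
      by rw [show (false ⊔ false : Bool) = false by decide]; exact hFa (hIjoin ha hb)⟩

/-- For a maximal partial homomorphism, `k⁻¹(1)` is up-closed and `k⁻¹(0)` is
down-closed. -/
lemma mph_closed {k : PMap L} (hk : k ∈ MPHset L) :
    (∀ ⦃a x : L⦄, k a = some true → a ≤ x → k x = some true) ∧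
    (∀ ⦃a x : L⦄, k a = some false → x ≤ a → k x = some false) := by
  classical
  set F : Set L := {x | ∃ a, k a = some true ∧ a ≤ x} with hF
  set I : Set L := {x | ∃ b, k b = some false ∧ x ≤ b} with hI
  have hdisj : ∀ x, x ∈ F → x ∈ I → False := by
    rintro x ⟨a, ha, hax⟩ ⟨b, hb, hxb⟩
    have hab : a ⊔ b = b := sup_eq_right.mpr (hax.trans hxb)
    have h2 := (hk.1.2.2 ha hb).2
    rw [hab, hb, show (true ⊔ false : Bool) = true by decide] at h2
    exact absurd h2 (by decide)
  have hphom := pair_phom F I ⟨⊤, hk.1.2.1, le_rfl⟩ ⟨⊥, hk.1.1, le_rfl⟩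
    (by rintro a x ⟨u, hu, hua⟩ hax; exact ⟨u, hu, hua.trans hax⟩)
    (by
      rintro a b ⟨u, hu, hua⟩ ⟨v, hv, hvb⟩
      refine ⟨u ⊓ v, ?_, inf_le_inf hua hvb⟩
      have h2 := (hk.1.2.2 hu hv).1
      rwa [show (true ⊓ true : Bool) = true by decide] at h2)
    (by rintro a x ⟨u, hu, hua⟩ hax; exact ⟨u, hu, hax.trans hua⟩)
    (by
      rintro a b ⟨u, hu, hua⟩ ⟨v, hv, hvb⟩
      refine ⟨u ⊔ v, ?_, sup_le_sup hua hvb⟩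
      have h2 := (hk.1.2.2 hu hv).2
      rwa [show (false ⊔ false : Bool) = false by decide] at h2)
    hdisj
  have hext : PExt (fun x => if x ∈ F then some true else if x ∈ I then some false else none) k := by
    intro x a hxa
    cases a with
    | true =>
      show (if x ∈ F then some true else if x ∈ I then some false else none) = some true
      exact if_pos ⟨x, hxa, le_rfl⟩
    | false =>
      show (if x ∈ F then some true else if x ∈ I then some false else none) = some false
      rw [if_neg (fun h => hdisj x h ⟨x, hxa, le_rfl⟩)]
      exact if_pos ⟨x, hxa, le_rfl⟩
  have heq := hk.2 _ hphom hext
  constructor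
  · intro a x ha hax
    have hxF : x ∈ F := ⟨a, ha, hax⟩
    have := congrFun heq x
    rw [← this]
    exact if_pos hxF
  · intro a x ha hax
    have hxI : x ∈ I := ⟨a, ha, hax⟩
    have := congrFun heq x
    rw [← this, if_neg (fun h => hdisj x h hxI)]
    exact if_pos hxI

/-- Witnesses obstructing extension of a maximal partial `E`-preserving map. -/
lemma mpe_witness {X : Type*} {E : X → X → Prop} {φ : PMap X} (hφ : φ ∈ MPE E)
    {v : X} (hv : φ v = none) :
    (∃ g, φ g = some true ∧ E g v) ∧ (∃ h, φ h = some false ∧ E v h) := by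
  classical
  have key : ∀ w : Bool,
      (∀ x y, E x y → ∀ a b : Bool, (if x = v then some w else φ x) = some a →
        (if y = v then some w else φ y) = some b → a ≤ b) → False := by
    intro w hpres'
    have hpres : EPres E (fun x => if x = v then some w else φ x) := by
      intro x y hE a b hx hy
      exact hpres' x y hE a b hx hy
    have hpext : PExt (fun x => if x = v then some w else φ x) φ := by
      intro x a hx
      have hxv : x ≠ v := fun h => by rw [h, hv] at hx; exact nomatch hx
      show (if x = v then some w else φ x) = some a
      rw [if_neg hxv]; exact hx
    have heq := hφ.2 _ hpres hpext
    have hvv : (if v = v then some w else φ v) = some w := if_pos rfl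
    have hvv2 : φ v = some w := by rw [← heq]; exact hvv
    rw [hv] at hvv2
    exact nomatch hvv2
  constructor
  · by_contra hng
    push_neg at hng
    refine key false ?_
    intro x y hE a b hx hy
    by_cases hxv : x = v
    · rw [if_pos hxv] at hx
      cases Option.some.inj hx
      exact Bool.false_le b
    · rw [if_neg hxv] at hx
      by_cases hyv : y = v
      · subst hyv
        cases a with
        | false => exact Bool.false_le b
        | true => exact absurd hE (hng x hx)
      · rw [if_neg hyv] at hy
        exact hφ.1 hE hx hy
  · by_contra hng
    push_neg at hng
    refine key true ?_
    intro x y hE a b hx hy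
    by_cases hyv : y = v
    · rw [if_pos hyv] at hy
      cases Option.some.inj hy
      exact Bool.le_true a
    · rw [if_neg hyv] at hy
      by_cases hxv : x = v
      · subst hxv
        cases b with
        | true => exact Bool.le_true a
        | false => exact absurd hE (hng y hy)
      · rw [if_neg hxv] at hx
        exact hφ.1 hE hx hy

end Aux

/-- Let `L` be a bounded lattice, `X = D♭(L)`,
`φ ∈ MPE(X,2)` and `f ∈ MPH(L,2_B)`. Then (i) if `f ∉ φ⁻¹(0)` there is
`g ∈ φ⁻¹(1)` with `f ≤₂ g`; (ii) if `f ∉ φ⁻¹(1)` there is `g ∈ φ⁻¹(0)` with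
`f ≤₁ g`. -/
theorem stmt_5 (L : Type*) [Lattice L] [BoundedOrder L]
    (φ : PMap (MPHsub L)) (hφ : φ ∈ MPE (EM L)) (f : MPHsub L) :
    (f ∉ pre0 φ → ∃ g ∈ pre1 φ, le2 f.1 g.1) ∧
    (f ∉ pre1 φ → ∃ g ∈ pre0 φ, le1 f.1 g.1) := by
  classical
  constructor
  · intro hf
    cases hφf : φ f with
    | some b =>
      cases b with
      | false => exact absurd hφf hf
      | true => exact ⟨f, hφf, fun _ h => h⟩
    | none =>
      obtain ⟨g, hφg, hEgf⟩ := (mpe_witness hφ hφf).1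
      set F : Set L := {x | ∃ a, g.1 a = some true ∧ a ≤ x} with hFdef
      set I : Set L := {x | ∃ b, f.1 b = some false ∧ x ≤ b} with hIdef
      have hdisj : ∀ x, x ∈ F → x ∈ I → False := by
        rintro x ⟨u, hu, hux⟩ ⟨v, hv, hxv⟩
        have hgv : g.1 v = some true := (mph_closed g.2).1 hu (hux.trans hxv)
        exact absurd (hEgf hgv hv) (by decide)
      have hphom := pair_phom F I ⟨⊤, g.2.1.2.1, le_rfl⟩ ⟨⊥, f.2.1.1, le_rfl⟩
        (by rintro a x ⟨u, hu, hua⟩ hax; exact ⟨u, hu, hua.trans hax⟩)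
        (by
          rintro a b ⟨u, hu, hua⟩ ⟨v, hv, hvb⟩
          refine ⟨u ⊓ v, ?_, inf_le_inf hua hvb⟩
          have h2 := (g.2.1.2.2 hu hv).1
          rwa [show (true ⊓ true : Bool) = true by decide] at h2)
        (by rintro a x ⟨u, hu, hua⟩ hax; exact ⟨u, hu, hax.trans hua⟩)
        (by
          rintro a b ⟨u, hu, hua⟩ ⟨v, hv, hvb⟩
          refine ⟨u ⊔ v, ?_, sup_le_sup hua hvb⟩
          have h2 := (f.2.1.2.2 hu hv).2
          rwa [show (false ⊔ false : Bool) = false by decide] at h2)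
        hdisj
      obtain ⟨k, hkM, hkext⟩ := exists_mph_ext _ hphom
      set K : MPHsub L := ⟨k, hkM⟩ with hKdef
      have hsub1 : ∀ {x : L}, g.1 x = some true → k x = some true := by
        intro x hx
        refine hkext ?_
        show (if x ∈ F then some true else if x ∈ I then some false else none) = some true
        exact if_pos ⟨x, hx, le_rfl⟩
      have hsub0 : ∀ {x : L}, f.1 x = some false → k x = some false := by
        intro x hx
        refine hkext ?_
        show (if x ∈ F then some true else if x ∈ I then some false else none) = some false
        rw [if_neg (fun h => hdisj x h ⟨x, hx, le_rfl⟩)]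
        exact if_pos ⟨x, hx, le_rfl⟩
      have hle2 : le2 f.1 K.1 := fun x hx => hsub0 hx
      have hEgK : EM L g K := by
        intro z a b hgz hkz
        cases a with
        | false => exact Bool.false_le b
        | true =>
          have hkz' : k z = some b := hkz
          rw [hsub1 hgz] at hkz'
          cases Option.some.inj hkz'
          exact le_rfl
      cases hK : φ K with
      | some b =>
        cases b with
        | true => exact ⟨K, hK, hle2⟩
        | false => exact absurd (hφ.1 hEgK hφg hK) (by decide)
      | none =>
        obtain ⟨h, hφh, hEKh⟩ := (mpe_witness hφ hK).2
        have hEgh : EM L g h := by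
          intro z a b hgz hhz
          cases a with
          | false => exact Bool.false_le b
          | true => exact hEKh (hsub1 hgz) hhz
        exact absurd (hφ.1 hEgh hφg hφh) (by decide)
  · intro hf
    cases hφf : φ f with
    | some b =>
      cases b with
      | true => exact absurd hφf hf
      | false => exact ⟨f, hφf, fun _ h => h⟩
    | none =>
      obtain ⟨h, hφh, hEfh⟩ := (mpe_witness hφ hφf).2
      set F : Set L := {x | ∃ a, f.1 a = some true ∧ a ≤ x} with hFdef
      set I : Set L := {x | ∃ b, h.1 b = some false ∧ x ≤ b} with hIdef
      have hdisj : ∀ x, x ∈ F → x ∈ I → False := by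
        rintro x ⟨u, hu, hux⟩ ⟨v, hv, hxv⟩
        have hhu : h.1 u = some false := (mph_closed h.2).2 hv (hux.trans hxv)
        exact absurd (hEfh hu hhu) (by decide)
      have hphom := pair_phom F I ⟨⊤, f.2.1.2.1, le_rfl⟩ ⟨⊥, h.2.1.1, le_rfl⟩
        (by rintro a x ⟨u, hu, hua⟩ hax; exact ⟨u, hu, hua.trans hax⟩)
        (by
          rintro a b ⟨u, hu, hua⟩ ⟨v, hv, hvb⟩
          refine ⟨u ⊓ v, ?_, inf_le_inf hua hvb⟩
          have h2 := (f.2.1.2.2 hu hv).1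
          rwa [show (true ⊓ true : Bool) = true by decide] at h2)
        (by rintro a x ⟨u, hu, hua⟩ hax; exact ⟨u, hu, hax.trans hua⟩)
        (by
          rintro a b ⟨u, hu, hua⟩ ⟨v, hv, hvb⟩
          refine ⟨u ⊔ v, ?_, sup_le_sup hua hvb⟩
          have h2 := (h.2.1.2.2 hu hv).2
          rwa [show (false ⊔ false : Bool) = false by decide] at h2)
        hdisj
      obtain ⟨k, hkM, hkext⟩ := exists_mph_ext _ hphom
      set K : MPHsub L := ⟨k, hkM⟩ with hKdef
      have hsub1 : ∀ {x : L}, f.1 x = some true → k x = some true := by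
        intro x hx
        refine hkext ?_
        show (if x ∈ F then some true else if x ∈ I then some false else none) = some true
        exact if_pos ⟨x, hx, le_rfl⟩
      have hsub0 : ∀ {x : L}, h.1 x = some false → k x = some false := by
        intro x hx
        refine hkext ?_
        show (if x ∈ F then some true else if x ∈ I then some false else none) = some false
        rw [if_neg (fun hh => hdisj x hh ⟨x, hx, le_rfl⟩)]
        exact if_pos ⟨x, hx, le_rfl⟩
      have hle1 : le1 f.1 K.1 := fun x hx => hsub1 hx
      have hEKh : EM L K h := by
        intro z a b hkz hhz
        cases b with
        | true => exact Bool.le_true a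
        | false =>
          have hkz' : k z = some a := hkz
          rw [hsub0 hhz] at hkz'
          cases Option.some.inj hkz'
          exact le_rfl
      cases hK : φ K with
      | some b =>
        cases b with
        | false => exact ⟨K, hK, hle1⟩
        | true => exact absurd (hφ.1 hEKh hK hφh) (by decide)
      | none =>
        obtain ⟨g, hφg, hEgK⟩ := (mpe_witness hφ hK).1
        have hEgh : EM L g h := by
          intro z a b hgz hhz
          cases b with
          | true => exact Bool.le_true a
          | false => exact hEgK hgz (hsub0 hhz)
        exact absurd (hφ.1 hEgh hφg hφh) (by decide)

end CanExt
end

section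
/- Let L be a bounded lattice, X = D♭(L), φ ∈ MPE(X,2) and f,g ∈ MPH(L,2_B). Then (i) if f ≤₂ g and φ(f) = 0, then φ(g) = 0, and (ii) if f ≤₁ g and φ(f) = 1, then φ(g) = 1. -/
namespace CanExt

open Classical

/-- Let `L` be a bounded lattice, `X = D♭(L)`,
`φ ∈ MPE(X,2)` and `f, g ∈ MPH(L,2_B)`. Then (i) if `f ≤₂ g` and `φ(f) = 0`
then `φ(g) = 0`; (ii) if `f ≤₁ g` and `φ(f) = 1` then `φ(g) = 1`. -/
theorem stmt_6 (L : Type*) [Lattice L] [BoundedOrder L]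
    (φ : PMap (MPHsub L)) (hφ : φ ∈ MPE (EM L)) (f g : MPHsub L) :
    (le2 f.1 g.1 → φ f = some false → φ g = some false) ∧
    (le1 f.1 g.1 → φ f = some true → φ g = some true) := by
  obtain ⟨hpres, hmax⟩ := hφ
  constructor
  · intro hle hf
    have key : ∀ h : MPHsub L, EM L h g → EM L h f := by
      intro h hE x a b hhx hfx
      cases b with
      | true => simp
      | false => exact hE hhx (hle hfx)
    cases hg : φ g with
    | some c =>
      cases c with
      | false => rfl
      | true =>
        have hEgg : EM L g g := by
          intro x a b h1 h2
          rw [h1] at h2; injection h2 with h; exact h ▸ le_refl a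
        have := hpres (key g hEgg) hg hf
        exact absurd this (by decide)
    | none =>
      classical
      set ψ : PMap (MPHsub L) := fun x => if x = g then some false else φ x with hψ
      have hpresψ : EPres (EM L) ψ := by
        intro x y hE a b hx hy
        by_cases hyg : y = g
        · simp only [hψ, if_pos hyg] at hy
          injection hy with hy
          by_cases hxg : x = g
          · simp only [hψ, if_pos hxg] at hx
            injection hx with hx
            rw [← hx, ← hy]
          · simp only [hψ, if_neg hxg] at hx
            have hE' : EM L x g := hyg ▸ hE
            have := hpres (key x hE') hx hf
            rw [← hy]; exact this
        · simp only [hψ, if_neg hyg] at hy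
          by_cases hxg : x = g
          · simp only [hψ, if_pos hxg] at hx
            injection hx with hx
            rw [← hx]; exact Bool.false_le b
          · simp only [hψ, if_neg hxg] at hx
            exact hpres hE hx hy
      have hext : PExt ψ φ := by
        intro x a hx
        simp only [hψ]
        split
        · next h => subst h; rw [hg] at hx; cases hx
        · exact hx
      have heq := hmax ψ hpresψ hext
      have hψg : ψ g = some false := by simp [hψ]
      rw [heq, hg] at hψg
      exact hψg
  · intro hle hf
    have key : ∀ h : MPHsub L, EM L g h → EM L f h := by
      intro h hE x a b hfx hhx
      cases a with
      | false => exact Bool.false_le b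
      | true => exact hE (hle hfx) hhx
    cases hg : φ g with
    | some c =>
      cases c with
      | true => rfl
      | false =>
        have hEgg : EM L g g := by
          intro x a b h1 h2
          rw [h1] at h2; injection h2 with h; exact h ▸ le_refl a
        have := hpres (key g hEgg) hf hg
        exact absurd this (by decide)
    | none =>
      classical
      set ψ : PMap (MPHsub L) := fun x => if x = g then some true else φ x with hψ
      have hpresψ : EPres (EM L) ψ := by
        intro x y hE a b hx hy
        by_cases hxg : x = g
        · simp only [hψ, if_pos hxg] at hx
          injection hx with hx
          by_cases hyg : y = g
          · simp only [hψ, if_pos hyg] at hy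
            injection hy with hy
            rw [← hx, ← hy]
          · simp only [hψ, if_neg hyg] at hy
            have hE' : EM L g y := hxg ▸ hE
            have := hpres (key y hE') hf hy
            rw [← hx]; exact this
        · simp only [hψ, if_neg hxg] at hx
          by_cases hyg : y = g
          · simp only [hψ, if_pos hyg] at hy
            injection hy with hy
            rw [← hy]; exact Bool.le_true a
          · simp only [hψ, if_neg hyg] at hy
            exact hpres hE hx hy
      have hext : PExt ψ φ := by
        intro x a hx
        simp only [hψ]
        split
        · next h => subst h; rw [hg] at hx; cases hx
        · exact hx
      have heq := hmax ψ hpresψ hext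
      have hψg : ψ g = some true := by simp [hψ]
      rw [heq, hg] at hψg
      exact hψg

end CanExt
end

section
/- Let L be a bounded lattice, X = D♭(L), φ ∈ MPE(X,2) and a ∈ L. Then (i) if φ⁻¹(0) ∩ W_a = ∅ then φ⁻¹(0) ⊆ V_a, and (ii) if φ⁻¹(1) ∩ V_a = ∅ then φ⁻¹(1) ⊆ W_a. -/
namespace CanExt

open Classical

section Aux

variable {L : Type*} [Lattice L] [BoundedOrder L]

set_option linter.unusedSectionVars false

open Classical in
/-- The partial map determined by a pair of subsets. -/
noncomputable def mp (F I : Set L) : PMap L :=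
  fun x => if x ∈ F then some true else if x ∈ I then some false else none

/-- A disjoint filter–ideal pair. -/
def GoodPair (F I : Set L) : Prop :=
  IsLatFilter L F ∧ IsLatIdeal L I ∧ ∀ ⦃x⦄, x ∈ F → x ∈ I → False

/-- A maximal disjoint filter–ideal pair. -/
def MaxPair (F I : Set L) : Prop :=
  GoodPair F I ∧ ∀ F' I', GoodPair F' I' → F ⊆ F' → I ⊆ I' → F' ⊆ F ∧ I' ⊆ I

lemma mp_eq_true {F I : Set L} {x : L} (h : x ∈ F) : mp F I x = some true := if_pos h

lemma mp_eq_false {F I : Set L} (hd : ∀ ⦃x⦄, x ∈ F → x ∈ I → False) {x : L} (h : x ∈ I) :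
    mp F I x = some false := by
  unfold mp
  rw [if_neg (fun hF => hd hF h), if_pos h]

lemma mem_of_mp_true {F I : Set L} {x : L} (h : mp F I x = some true) : x ∈ F := by
  unfold mp at h
  split_ifs at h with h1 h2 <;> simp_all

lemma mem_of_mp_false {F I : Set L} {x : L} (h : mp F I x = some false) : x ∈ I := by
  unfold mp at h
  split_ifs at h with h1 h2 <;> simp_all

lemma maxpair_mem_MPHset {F I : Set L} (h : MaxPair F I) : mp F I ∈ MPHset L := by
  obtain ⟨⟨hF, hI, hd⟩, hmax⟩ := h
  obtain ⟨u0, hu0⟩ := hF.1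
  obtain ⟨v0, hv0⟩ := hI.1
  have htop : (⊤ : L) ∈ F := hF.2.1 hu0 le_top
  have hbot : (⊥ : L) ∈ I := hI.2.1 hv0 bot_le
  have hmeet : ∀ ⦃a b : L⦄ ⦃x y : Bool⦄, mp F I a = some x → mp F I b = some y →
      mp F I (a ⊓ b) = some (x ⊓ y) ∧ mp F I (a ⊔ b) = some (x ⊔ y) := by
    intro a b x y hax hby
    cases x <;> cases y
    · have ha := mem_of_mp_false hax
      have hb := mem_of_mp_false hby
      exact ⟨mp_eq_false hd (hI.2.1 ha inf_le_left), mp_eq_false hd (hI.2.2 ha hb)⟩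
    · have ha := mem_of_mp_false hax
      have hb := mem_of_mp_true hby
      exact ⟨mp_eq_false hd (hI.2.1 ha inf_le_left), mp_eq_true (hF.2.1 hb le_sup_right)⟩
    · have ha := mem_of_mp_true hax
      have hb := mem_of_mp_false hby
      exact ⟨mp_eq_false hd (hI.2.1 hb inf_le_right), mp_eq_true (hF.2.1 ha le_sup_left)⟩
    · have ha := mem_of_mp_true hax
      have hb := mem_of_mp_true hby
      exact ⟨mp_eq_true (hF.2.2 ha hb), mp_eq_true (hF.2.1 ha le_sup_left)⟩
  refine ⟨⟨mp_eq_false hd hbot, mp_eq_true htop, hmeet⟩, ?_⟩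
  intro g hg hext
  funext x
  by_cases hxF : x ∈ F
  · rw [hext (mp_eq_true hxF), mp_eq_true hxF]
  by_cases hxI : x ∈ I
  · rw [hext (mp_eq_false hd hxI), mp_eq_false hd hxI]
  have hmpx : mp F I x = none := by unfold mp; rw [if_neg hxF, if_neg hxI]
  rw [hmpx]
  cases hgx : g x with
  | none => rfl
  | some b =>
    exfalso
    cases b
    · -- g x = some false : consider the ideal generated by I and x
      by_cases hdisj : ∃ y ∈ F, ∃ v ∈ I, y ≤ x ⊔ v
      · obtain ⟨u, huF, v, hvI, hle⟩ := hdisj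
        have hgv : g v = some false := hext (mp_eq_false hd hvI)
        have hgxv : g (x ⊔ v) = some (false ⊔ false) := (hg.2.2 hgx hgv).2
        have hgu : g u = some true := hext (mp_eq_true huF)
        have h2 : g (u ⊓ (x ⊔ v)) = some (true ⊓ (false ⊔ false)) := (hg.2.2 hgu hgxv).1
        rw [inf_eq_left.mpr hle, hgu] at h2
        exact absurd h2 (by decide)
      · have hI' : IsLatIdeal L {y | ∃ v ∈ I, y ≤ x ⊔ v} := by
          refine ⟨⟨x, ⊥, hbot, le_sup_left⟩, ?_, ?_⟩
          · rintro p q ⟨v, hv, hle⟩ hqp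
            exact ⟨v, hv, hqp.trans hle⟩
          · rintro p q ⟨v, hv, hle⟩ ⟨v', hv', hle'⟩
            exact ⟨v ⊔ v', hI.2.2 hv hv',
              sup_le (hle.trans (sup_le_sup_left le_sup_left x))
                (hle'.trans (sup_le_sup_left le_sup_right x))⟩
        have hgp : GoodPair F {y | ∃ v ∈ I, y ≤ x ⊔ v} :=
          ⟨hF, hI', fun y hyF hyI' => hdisj ⟨y, hyF, hyI'⟩⟩
        have hsub := (hmax F _ hgp (fun _ h => h) (fun v hv => ⟨v, hv, le_sup_right⟩)).2
        exact hxI (hsub ⟨⊥, hbot, le_sup_left⟩)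
    · -- g x = some true : consider the filter generated by F and x
      by_cases hdisj : ∃ y ∈ I, ∃ u ∈ F, u ⊓ x ≤ y
      · obtain ⟨v, hvI, u, huF, hle⟩ := hdisj
        have hgu : g u = some true := hext (mp_eq_true huF)
        have hgux : g (u ⊓ x) = some (true ⊓ true) := (hg.2.2 hgu hgx).1
        have hgv : g v = some false := hext (mp_eq_false hd hvI)
        have h2 : g ((u ⊓ x) ⊓ v) = some ((true ⊓ true) ⊓ false) := (hg.2.2 hgux hgv).1
        rw [inf_eq_left.mpr hle, hgux] at h2
        exact absurd h2 (by decide)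
      · have hF' : IsLatFilter L {y | ∃ u ∈ F, u ⊓ x ≤ y} := by
          refine ⟨⟨x, ⊤, htop, inf_le_right⟩, ?_, ?_⟩
          · rintro p q ⟨u, hu, hle⟩ hpq
            exact ⟨u, hu, hle.trans hpq⟩
          · rintro p q ⟨u, hu, hle⟩ ⟨u', hu', hle'⟩
            exact ⟨u ⊓ u', hF.2.2 hu hu',
              le_inf ((inf_le_inf_right x inf_le_left).trans hle)
                ((inf_le_inf_right x inf_le_right).trans hle')⟩
        have hgp : GoodPair {y | ∃ u ∈ F, u ⊓ x ≤ y} I :=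
          ⟨hF', hI, fun y hyF' hyI => hdisj ⟨y, hyI, hyF'⟩⟩
        have hsub := (hmax _ I hgp (fun u hu => ⟨u, hu, inf_le_left⟩) (fun _ h => h)).1
        exact hxF (hsub ⟨⊤, htop, inf_le_right⟩)

lemma exists_maxpair {F I : Set L} (h : GoodPair F I) :
    ∃ F' I', MaxPair F' I' ∧ F ⊆ F' ∧ I ⊆ I' := by
  have hub : ∀ c ⊆ {p : Set L × Set L | GoodPair p.1 p.2}, IsChain (· ≤ ·) c → ∀ y ∈ c,
      ∃ ub ∈ {p : Set L × Set L | GoodPair p.1 p.2}, ∀ z ∈ c, z ≤ ub := by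
    intro c hcs hchain y hyc
    have key : ∀ p ∈ c, ∀ q ∈ c, p ≤ q ∨ q ≤ p := by
      intro p hp q hq
      rcases eq_or_ne p q with rfl | hne
      · exact Or.inl le_rfl
      · exact hchain hp hq hne
    refine ⟨(⋃ p ∈ c, p.1, ⋃ p ∈ c, p.2), ⟨⟨?_, ?_, ?_⟩, ⟨?_, ?_, ?_⟩, ?_⟩, ?_⟩
    · obtain ⟨u, hu⟩ := (hcs hyc).1.1
      exact ⟨u, Set.mem_biUnion hyc hu⟩
    · rintro p q hp hpq
      simp only [Set.mem_iUnion] at hp ⊢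
      obtain ⟨r, hr, hpr⟩ := hp
      exact ⟨r, hr, (hcs hr).1.2.1 hpr hpq⟩
    · rintro p q hp hq
      simp only [Set.mem_iUnion] at hp hq ⊢
      obtain ⟨r, hr, hpr⟩ := hp
      obtain ⟨s, hs, hqs⟩ := hq
      rcases key r hr s hs with hle | hle
      · exact ⟨s, hs, (hcs hs).1.2.2 (hle.1 hpr) hqs⟩
      · exact ⟨r, hr, (hcs hr).1.2.2 hpr (hle.1 hqs)⟩
    · obtain ⟨v, hv⟩ := (hcs hyc).2.1.1
      exact ⟨v, Set.mem_biUnion hyc hv⟩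
    · rintro p q hp hpq
      simp only [Set.mem_iUnion] at hp ⊢
      obtain ⟨r, hr, hpr⟩ := hp
      exact ⟨r, hr, (hcs hr).2.1.2.1 hpr hpq⟩
    · rintro p q hp hq
      simp only [Set.mem_iUnion] at hp hq ⊢
      obtain ⟨r, hr, hpr⟩ := hp
      obtain ⟨s, hs, hqs⟩ := hq
      rcases key r hr s hs with hle | hle
      · exact ⟨s, hs, (hcs hs).2.1.2.2 (hle.2 hpr) hqs⟩
      · exact ⟨r, hr, (hcs hr).2.1.2.2 hpr (hle.2 hqs)⟩
    · intro x hx1 hx2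
      simp only [Set.mem_iUnion] at hx1 hx2
      obtain ⟨r, hr, hpr⟩ := hx1
      obtain ⟨s, hs, hqs⟩ := hx2
      rcases key r hr s hs with hle | hle
      · exact (hcs hs).2.2 (hle.1 hpr) hqs
      · exact (hcs hr).2.2 hpr (hle.2 hqs)
    · intro z hz
      exact ⟨Set.subset_biUnion_of_mem (u := fun p => p.1) hz,
        Set.subset_biUnion_of_mem (u := fun p => p.2) hz⟩
  obtain ⟨m, hxm, hm⟩ := zorn_le_nonempty₀ {p : Set L × Set L | GoodPair p.1 p.2} hub (F, I) h
  refine ⟨m.1, m.2, ⟨hm.1, ?_⟩, hxm.1, hxm.2⟩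
  intro F' I' hgp h1 h2
  have := hm.2 (y := (F', I')) hgp ⟨h1, h2⟩
  exact ⟨this.1, this.2⟩

/-- Every maximal partial homomorphism comes from a maximal filter–ideal pair. -/
lemma mph_structure {f : PMap L} (hf : f ∈ MPHset L) :
    ∃ F I, MaxPair F I ∧ f = mp F I := by
  obtain ⟨hfh, hfm⟩ := hf
  have hgood : GoodPair {x | ∃ u, f u = some true ∧ u ≤ x} {x | ∃ v, f v = some false ∧ x ≤ v} := by
    refine ⟨⟨⟨⊤, ⊤, hfh.2.1, le_rfl⟩, ?_, ?_⟩, ⟨⟨⊥, ⊥, hfh.1, le_rfl⟩, ?_, ?_⟩, ?_⟩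
    · rintro p q ⟨u, hu, hle⟩ hpq
      exact ⟨u, hu, hle.trans hpq⟩
    · rintro p q ⟨u, hu, hle⟩ ⟨u', hu', hle'⟩
      refine ⟨u ⊓ u', ?_, inf_le_inf hle hle'⟩
      have h := (hfh.2.2 hu hu').1
      rwa [show (true ⊓ true : Bool) = true by decide] at h
    · rintro p q ⟨v, hv, hle⟩ hqp
      exact ⟨v, hv, hqp.trans hle⟩
    · rintro p q ⟨v, hv, hle⟩ ⟨v', hv', hle'⟩
      refine ⟨v ⊔ v', ?_, sup_le_sup hle hle'⟩
      have h := (hfh.2.2 hv hv').2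
      rwa [show (false ⊔ false : Bool) = false by decide] at h
    · rintro x ⟨u, hu, hux⟩ ⟨v, hv, hxv⟩
      have h := (hfh.2.2 hu hv).1
      rw [inf_eq_left.mpr (hux.trans hxv), hu] at h
      exact absurd h (by decide)
  obtain ⟨F, I, hFI, hFsub, hIsub⟩ := exists_maxpair hgood
  have hmem := maxpair_mem_MPHset hFI
  have hext : PExt (mp F I) f := by
    intro x b hb
    cases b
    · exact mp_eq_false hFI.1.2.2 (hIsub ⟨x, hb, le_rfl⟩)
    · exact mp_eq_true (hFsub ⟨x, hb, le_rfl⟩)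
  exact ⟨F, I, hFI, (hfm _ hmem.1 hext).symm⟩

lemma exists_up {f : PMap L} (hf : f ∈ MPHset L) {a : L} (ha : f a = none) :
    ∃ g, g ∈ MPHset L ∧ g a = some true ∧ ∀ ⦃x⦄, f x = some false → g x = some false := by
  obtain ⟨F, I, hFI, rfl⟩ := mph_structure hf
  have haI : a ∉ I := fun h => by rw [mp_eq_false hFI.1.2.2 h] at ha; cases ha
  have hgood : GoodPair {x | a ≤ x} I :=
    ⟨⟨⟨a, le_rfl⟩, fun u v hu huv => hu.trans huv, fun u v hu hv => le_inf hu hv⟩,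
      hFI.1.2.1, fun x hax hxI => haI (hFI.1.2.1.2.1 hxI hax)⟩
  obtain ⟨G, J, hGJ, hGsub, hJsub⟩ := exists_maxpair hgood
  refine ⟨mp G J, maxpair_mem_MPHset hGJ, mp_eq_true (hGsub le_rfl), ?_⟩
  intro x hx
  exact mp_eq_false hGJ.1.2.2 (hJsub (mem_of_mp_false hx))

lemma exists_down {f : PMap L} (hf : f ∈ MPHset L) {a : L} (ha : f a = none) :
    ∃ g, g ∈ MPHset L ∧ g a = some false ∧ ∀ ⦃x⦄, f x = some true → g x = some true := by
  obtain ⟨F, I, hFI, rfl⟩ := mph_structure hf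
  have haF : a ∉ F := fun h => by rw [mp_eq_true h] at ha; cases ha
  have hgood : GoodPair F {x | x ≤ a} :=
    ⟨hFI.1.1, ⟨⟨a, le_rfl⟩, fun u v hu hvu => hvu.trans hu, fun u v hu hv => sup_le hu hv⟩,
      fun x hxF hxa => haF (hFI.1.1.2.1 hxF hxa)⟩
  obtain ⟨G, J, hGJ, hGsub, hJsub⟩ := exists_maxpair hgood
  refine ⟨mp G J, maxpair_mem_MPHset hGJ, mp_eq_false hGJ.1.2.2 (hJsub le_rfl), ?_⟩
  intro x hx
  exact mp_eq_true (hGsub (mem_of_mp_true hx))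

/-- Failure of a one-point extension of a maximal `E`-preserving map by `0`. -/
lemma mpe_witness_false {X : Type*} {E : X → X → Prop} {φ : PMap X} (hφ : φ ∈ MPE E)
    {g : X} (hg : φ g = none) : ∃ z, φ z = some true ∧ E z g := by
  classical
  set ψ : PMap X := fun x => if x = g then some false else φ x with hψdef
  have hext : PExt ψ φ := by
    intro x b hb
    by_cases hx : x = g
    · rw [hx, hg] at hb; cases hb
    · rw [hψdef]; simp only [if_neg hx]; exact hb
  have hne : ψ ≠ φ := by
    intro he
    have := congrFun he g
    simp [hψdef, hg] at this
  have hnp : ¬ ∀ x y : X, E x y → ∀ a b : Bool, ψ x = some a → ψ y = some b → a ≤ b :=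
    fun h => hne (hφ.2 ψ h hext)
  push_neg at hnp
  obtain ⟨x, y, hxy, a, b, hxa, hyb, hab⟩ := hnp
  have hab' : a = true ∧ b = false := by
    cases a <;> cases b <;> first | exact ⟨rfl, rfl⟩ | exact absurd hab (by decide)
  obtain ⟨rfl, rfl⟩ := hab'
  have hxg : x ≠ g := by
    intro h
    rw [hψdef] at hxa
    simp only [if_pos h] at hxa
    cases hxa
  rw [hψdef] at hxa hyb
  simp only [if_neg hxg] at hxa
  by_cases hyg : y = g
  · exact ⟨x, hxa, hyg ▸ hxy⟩
  · simp only [if_neg hyg] at hyb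
    exact absurd (hφ.1 hxy hxa hyb) (by decide)

/-- Failure of a one-point extension of a maximal `E`-preserving map by `1`. -/
lemma mpe_witness_true {X : Type*} {E : X → X → Prop} {φ : PMap X} (hφ : φ ∈ MPE E)
    {g : X} (hg : φ g = none) : ∃ z, φ z = some false ∧ E g z := by
  classical
  set ψ : PMap X := fun x => if x = g then some true else φ x with hψdef
  have hext : PExt ψ φ := by
    intro x b hb
    by_cases hx : x = g
    · rw [hx, hg] at hb; cases hb
    · rw [hψdef]; simp only [if_neg hx]; exact hb
  have hne : ψ ≠ φ := by
    intro he
    have := congrFun he g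
    simp [hψdef, hg] at this
  have hnp : ¬ ∀ x y : X, E x y → ∀ a b : Bool, ψ x = some a → ψ y = some b → a ≤ b :=
    fun h => hne (hφ.2 ψ h hext)
  push_neg at hnp
  obtain ⟨x, y, hxy, a, b, hxa, hyb, hab⟩ := hnp
  have hab' : a = true ∧ b = false := by
    cases a <;> cases b <;> first | exact ⟨rfl, rfl⟩ | exact absurd hab (by decide)
  obtain ⟨rfl, rfl⟩ := hab'
  have hyg : y ≠ g := by
    intro h
    rw [hψdef] at hyb
    simp only [if_pos h] at hyb
    cases hyb
  rw [hψdef] at hxa hyb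
  simp only [if_neg hyg] at hyb
  by_cases hxg : x = g
  · exact ⟨y, hyb, hxg ▸ hxy⟩
  · simp only [if_neg hxg] at hxa
    exact absurd (hφ.1 hxy hxa hyb) (by decide)

end Aux

/-- Let `L` be a bounded lattice, `X = D♭(L)`,
`φ ∈ MPE(X,2)` and `a ∈ L`. Then (i) if `φ⁻¹(0) ∩ W_a = ∅` then
`φ⁻¹(0) ⊆ V_a`; (ii) if `φ⁻¹(1) ∩ V_a = ∅` then `φ⁻¹(1) ⊆ W_a`. -/
theorem stmt_8 (L : Type*) [Lattice L] [BoundedOrder L]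
    (φ : PMap (MPHsub L)) (hφ : φ ∈ MPE (EM L)) (a : L) :
    (pre0 φ ∩ WaM L a = ∅ → pre0 φ ⊆ VaM L a) ∧
    (pre1 φ ∩ VaM L a = ∅ → pre1 φ ⊆ WaM L a) := by
  constructor
  · intro hW f hf
    have hf0 : φ f = some false := hf
    show f.1 a = some false
    cases hfa : f.1 a with
    | some b =>
      cases b
      · rfl
      · have : f ∈ pre0 φ ∩ WaM L a := ⟨hf0, hfa⟩
        rw [hW] at this
        exact absurd this (Set.notMem_empty f)
    | none =>
      obtain ⟨g, hgM, hga, hgpre⟩ := exists_up f.2 hfa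
      have hEGf : EM L ⟨g, hgM⟩ f := by
        intro x p q hgx hfx
        have hgx' : g x = some p := hgx
        cases q
        · rw [hgpre hfx] at hgx'
          cases hgx'
          exact le_rfl
        · exact Bool.le_true p
      cases hGφ : φ ⟨g, hgM⟩ with
      | some c =>
        have hc := hφ.1 hEGf hGφ hf0
        have hc' : c = false := by cases c; rfl; exact absurd hc (by decide)
        rw [hc'] at hGφ
        have : (⟨g, hgM⟩ : MPHsub L) ∈ pre0 φ ∩ WaM L a := ⟨hGφ, hga⟩
        rw [hW] at this
        exact absurd this (Set.notMem_empty _)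
      | none =>
        obtain ⟨z, hz1, hEzG⟩ := mpe_witness_false hφ hGφ
        have hEzf : EM L z f := by
          intro x p q hzx hfx
          cases q
          · exact hEzG hzx (hgpre hfx)
          · exact Bool.le_true p
        exact absurd (hφ.1 hEzf hz1 hf0) (by decide)
  · intro hV f hf
    have hf1 : φ f = some true := hf
    show f.1 a = some true
    cases hfa : f.1 a with
    | some b =>
      cases b
      · have : f ∈ pre1 φ ∩ VaM L a := ⟨hf1, hfa⟩
        rw [hV] at this
        exact absurd this (Set.notMem_empty f)
      · rfl
    | none =>
      obtain ⟨g, hgM, hga, hgpre⟩ := exists_down f.2 hfa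
      have hEfG : EM L f ⟨g, hgM⟩ := by
        intro x p q hfx hgx
        have hgx' : g x = some q := hgx
        cases p
        · exact Bool.false_le q
        · rw [hgpre hfx] at hgx'
          cases hgx'
          exact le_rfl
      cases hGφ : φ ⟨g, hgM⟩ with
      | some c =>
        have hc := hφ.1 hEfG hf1 hGφ
        have hc' : c = true := by cases c; exact absurd hc (by decide); rfl
        rw [hc'] at hGφ
        have : (⟨g, hgM⟩ : MPHsub L) ∈ pre1 φ ∩ VaM L a := ⟨hGφ, hga⟩
        rw [hV] at this
        exact absurd this (Set.notMem_empty _)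
      | none =>
        obtain ⟨z, hz0, hEGz⟩ := mpe_witness_true hφ hGφ
        have hEfz : EM L f z := by
          intro x p q hfx hzx
          cases p
          · exact Bool.false_le q
          · exact hEGz (hgpre hfx) hzx
        exact absurd (hφ.1 hEfz hf1 hz0) (by decide)

end CanExt
end
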